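/- arXiv:1510.05622 — 8 statements merged into one kernel-verified Lean document; each statement's English description precedes it below -/
import Mathlib

section
/- Let d ≥ 1 and let M be a real d×(d+1) matrix of rank d, with columns m_1, …, m_{d+1}. For i ∈ {1,…,d+1} let minor(M,i) denote the determinant of the d×d matrix obtained from M by deleting its i-th column. Then the following are equivalent: (1) M is oriented, i.e., all the values (−1)^i·minor(M,i), i = 1,…,d+1, are nonzero and have the same sign; (2) for every invertible d×d real matrix A, the matrix A·M is oriented; (3) for every (d+1)×(d+1) permutation matrix P, the matrix M·P is oriented; (4) every nonzero vector in the kernel of M has all of its coordinates nonzero and of the same sign; (5) there exists i ∈ {1,…,d+1} such that m_i = Σ_{j≠i} μ_j m_j for some coefficients μ_j that are all negative; (6) for every i ∈ {1,…,d+1}, m_i = Σ_{j≠i} μ_j m_j for some coefficients μ_j that are all negative. -/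
open Matrix

noncomputable section

/-- The determinant of the square matrix obtained from a `d × (d+1)` matrix `M`
by deleting its `i`-th column. -/
def colMinor {d : ℕ} (M : Matrix (Fin d) (Fin (d + 1)) ℝ) (i : Fin (d + 1)) : ℝ :=
  (M.submatrix id i.succAbove).det

/-- A `d × (d+1)` real matrix is *oriented* if all the values `(-1)^i * minor(M, i)`
are nonzero and have the same sign. -/
def IsOriented {d : ℕ} (M : Matrix (Fin d) (Fin (d + 1)) ℝ) : Prop :=
  (∀ i : Fin (d + 1), 0 < (-1 : ℝ) ^ (i : ℕ) * colMinor M i) ∨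
  (∀ i : Fin (d + 1), (-1 : ℝ) ^ (i : ℕ) * colMinor M i < 0)

namespace StmtAux

variable {d : ℕ}

/-- The cofactor vector. -/
def wvec (M : Matrix (Fin d) (Fin (d + 1)) ℝ) : Fin (d + 1) → ℝ :=
  fun i => (-1 : ℝ) ^ (i : ℕ) * colMinor M i

lemma mulVec_wvec (M : Matrix (Fin d) (Fin (d + 1)) ℝ) : M.mulVec (wvec M) = 0 := by
  funext r
  set N : Matrix (Fin (d + 1)) (Fin (d + 1)) ℝ := Matrix.of (Fin.cons (M r) M) with hN
  have key : N.det = 0 := by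
    refine Matrix.det_zero_of_row_eq (i := 0) (j := r.succ) (Fin.succ_ne_zero r).symm ?_
    funext b
    simp [hN]; rfl
  rw [Matrix.det_succ_row_zero] at key
  simp only [Matrix.mulVec, dotProduct, Pi.zero_apply, wvec]
  rw [← key]
  refine Finset.sum_congr rfl fun j _ => ?_
  have h1 : N.submatrix Fin.succ j.succAbove = M.submatrix id j.succAbove := by
    ext a b; simp [hN]; rfl
  have h2 : N 0 j = M r j := by simp [hN]; rfl
  rw [h1, h2, colMinor]
  ring

end StmtAux

namespace StmtAux

variable {d : ℕ} {M : Matrix (Fin d) (Fin (d + 1)) ℝ}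

lemma finrank_ker (hrank : M.rank = d) :
    Module.finrank ℝ (LinearMap.ker M.mulVecLin) = 1 := by
  have h := LinearMap.finrank_range_add_finrank_ker M.mulVecLin
  rw [Matrix.rank] at hrank
  simp [Module.finrank_pi] at h
  omega

lemma exists_ker_nonzero (hrank : M.rank = d) :
    ∃ v : Fin (d + 1) → ℝ, M.mulVec v = 0 ∧ v ≠ 0 := by
  have h1 := finrank_ker hrank
  have : LinearMap.ker M.mulVecLin ≠ ⊥ := by
    intro h
    rw [h] at h1
    simp at h1
  obtain ⟨v, hv, hv0⟩ := Submodule.exists_mem_ne_zero_of_ne_bot this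
  exact ⟨v, hv, hv0⟩

lemma ker_prop (hrank : M.rank = d) {u v : Fin (d + 1) → ℝ}
    (hu : M.mulVec u = 0) (hv : M.mulVec v = 0) (hu0 : u ≠ 0) :
    ∃ c : ℝ, v = c • u := by
  have h1 := finrank_ker hrank
  have hu' : u ∈ LinearMap.ker M.mulVecLin := hu
  have hv' : v ∈ LinearMap.ker M.mulVecLin := hv
  have hnz : (⟨u, hu'⟩ : LinearMap.ker M.mulVecLin) ≠ 0 := by
    simpa [Subtype.ext_iff] using hu0
  obtain ⟨c, hc⟩ := (finrank_eq_one_iff_of_nonzero' (⟨u, hu'⟩ : LinearMap.ker M.mulVecLin) hnz).mp h1 ⟨v, hv'⟩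
  exact ⟨c, by simpa [Subtype.ext_iff, eq_comm] using hc⟩

end StmtAux

namespace StmtAux

variable {d : ℕ} {M : Matrix (Fin d) (Fin (d + 1)) ℝ}

lemma mulVec_surj (hrank : M.rank = d) : Function.Surjective M.mulVec := by
  have : LinearMap.range M.mulVecLin = ⊤ := by
    apply Submodule.eq_top_of_finrank_eq
    rw [← Matrix.rank, hrank]
    simp [Module.finrank_pi]
  intro y
  obtain ⟨x, hx⟩ := (LinearMap.range_eq_top.mp this) y
  exact ⟨x, hx⟩

lemma colMinor_ne_zero (hrank : M.rank = d) {v : Fin (d + 1) → ℝ} {i : Fin (d + 1)}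
    (hv : M.mulVec v = 0) (hvi : v i ≠ 0) : colMinor M i ≠ 0 := by
  set N : Matrix (Fin d) (Fin d) ℝ := M.submatrix id i.succAbove with hNdef
  have hsurj : Function.Surjective N.mulVec := by
    intro y
    obtain ⟨x, hx⟩ := mulVec_surj hrank y
    set x' : Fin (d + 1) → ℝ := x - (x i / v i) • v with hx'def
    have hx' : M.mulVec x' = y := by
      rw [hx'def]
      simp [Matrix.mulVec_sub, hx, Matrix.mulVec_smul, hv]
    have hxi : x' i = 0 := by
      simp [hx'def]
      field_simp
      ring
    refine ⟨fun b => x' (i.succAbove b), ?_⟩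
    funext r
    have expand : M.mulVec x' r = M r i * x' i + ∑ b, M r (i.succAbove b) * x' (i.succAbove b) := by
      simp only [Matrix.mulVec, dotProduct]
      rw [Fin.sum_univ_succAbove (fun j => M r j * x' j) i]
    rw [hx'] at expand
    simp only [Matrix.mulVec, dotProduct, hNdef, Matrix.submatrix_apply, id_eq]
    rw [hxi, mul_zero, zero_add] at expand
    exact expand.symm
  have := Matrix.mulVec_surjective_iff_isUnit.mp hsurj
  have hdet : IsUnit N.det := (Matrix.isUnit_iff_isUnit_det N).mp this
  exact hdet.ne_zero

end StmtAux

namespace StmtAux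

variable {d : ℕ} {M : Matrix (Fin d) (Fin (d + 1)) ℝ}

/-- If the kernel contains an everywhere-positive vector, then every nonzero kernel
vector has all coordinates of the same sign. -/
lemma sign_prop (hrank : M.rank = d) {v : Fin (d + 1) → ℝ}
    (hv : M.mulVec v = 0) (hvpos : ∀ j, 0 < v j) :
    ∀ u : Fin (d + 1) → ℝ, M.mulVec u = 0 → u ≠ 0 →
      (∀ j, 0 < u j) ∨ (∀ j, u j < 0) := by
  intro u hu hu0
  have hv0 : v ≠ 0 := by
    intro h
    have := hvpos 0
    rw [h] at this
    simp at this
  obtain ⟨c, rfl⟩ := ker_prop hrank hv hu hv0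
  have hc : c ≠ 0 := by rintro rfl; simp at hu0
  rcases hc.lt_or_gt with h | h
  · right; intro j; have := hvpos j; simpa using mul_neg_of_neg_of_pos h this
  · left; intro j; have := hvpos j; simpa using mul_pos h this

lemma oriented_iff (hrank : M.rank = d) :
    IsOriented M ↔ ∀ v : Fin (d + 1) → ℝ, M.mulVec v = 0 → v ≠ 0 →
      (∀ j, 0 < v j) ∨ (∀ j, v j < 0) := by
  constructor
  · intro h
    rcases h with h | h
    · exact sign_prop hrank (mulVec_wvec M) h
    · have : M.mulVec (-wvec M) = 0 := by
        rw [Matrix.mulVec_neg, mulVec_wvec M]; simp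
      exact sign_prop hrank this (fun j => by have := h j; simp [wvec]; linarith [h j])
  · intro h
    obtain ⟨u, hu, hu0⟩ := exists_ker_nonzero hrank
    have husign := h u hu hu0
    have hunz : ∀ j, u j ≠ 0 := by
      rcases husign with h' | h'
      · exact fun j => (h' j).ne'
      · exact fun j => (h' j).ne
    have hw : ∀ j, wvec M j ≠ 0 := by
      intro j
      have := colMinor_ne_zero hrank hu (hunz j)
      simp only [wvec]
      positivity
    have hwk := mulVec_wvec M
    have hw0 : wvec M ≠ 0 := fun h' => hw 0 (by rw [h']; rfl)
    rcases h (wvec M) hwk hw0 with h' | h'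
    · exact Or.inl h'
    · exact Or.inr h'

end StmtAux

namespace StmtAux

variable {d : ℕ} {M : Matrix (Fin d) (Fin (d + 1)) ℝ}

lemma colMinor_mul (A : Matrix (Fin d) (Fin d) ℝ) (i : Fin (d + 1)) :
    colMinor (A * M) i = A.det * colMinor M i := by
  have : (A * M).submatrix id i.succAbove = A * (M.submatrix id i.succAbove) := by
    ext a b
    simp [Matrix.mul_apply]
  rw [colMinor, this, Matrix.det_mul, colMinor]

lemma mulVec_perm (σ : Equiv.Perm (Fin (d + 1))) (v : Fin (d + 1) → ℝ) :
    (M.submatrix id σ).mulVec v = M.mulVec (fun j => v (σ.symm j)) := by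
  funext r
  simp only [Matrix.mulVec, dotProduct, Matrix.submatrix_apply, id_eq]
  rw [← Equiv.sum_comp σ (fun j => M r j * v (σ.symm j))]
  simp

lemma rank_perm (hrank : M.rank = d) (σ : Equiv.Perm (Fin (d + 1))) :
    (M.submatrix id σ).rank = d := by
  have hr : LinearMap.range (M.submatrix id σ).mulVecLin = LinearMap.range M.mulVecLin := by
    ext y
    simp only [LinearMap.mem_range, Matrix.mulVecLin_apply]
    constructor
    · rintro ⟨v, rfl⟩
      exact ⟨fun j => v (σ.symm j), (mulVec_perm σ v).symm⟩
    · rintro ⟨v, rfl⟩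
      refine ⟨fun j => v (σ j), ?_⟩
      rw [mulVec_perm]
      simp
  rw [Matrix.rank, hr, ← Matrix.rank, hrank]

/-- Building a positive kernel vector from a negative-coefficients representation. -/
lemma kervec_of_rep {i : Fin (d + 1)} {μ : Fin (d + 1) → ℝ}
    (hμ : ∀ j, j ≠ i → μ j < 0)
    (hrep : ∀ r, M r i = ∑ j ∈ Finset.univ.erase i, μ j * M r j) :
    ∃ v : Fin (d + 1) → ℝ, M.mulVec v = 0 ∧ (∀ j, 0 < v j) := by
  refine ⟨fun j => if j = i then 1 else -μ j, ?_, ?_⟩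
  · funext r
    simp only [Matrix.mulVec, dotProduct, Pi.zero_apply]
    rw [← Finset.add_sum_erase Finset.univ
      (fun j => M r j * if j = i then 1 else -μ j) (Finset.mem_univ i)]
    rw [if_pos rfl, mul_one]
    have hcong : (∑ j ∈ Finset.univ.erase i, M r j * if j = i then 1 else -μ j)
        = ∑ j ∈ Finset.univ.erase i, M r j * (-μ j) :=
      Finset.sum_congr rfl fun j hj => by rw [if_neg (Finset.ne_of_mem_erase hj)]
    rw [hcong, hrep r, ← Finset.sum_add_distrib]
    exact Finset.sum_eq_zero fun j hj => by ring
  · intro j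
    by_cases h : j = i
    · simp [h]
    · simp only [if_neg h]
      linarith [hμ j h]

/-- From a positive kernel vector, get a negative-coefficients representation. -/
lemma rep_of_kervec {v : Fin (d + 1) → ℝ} (hv : M.mulVec v = 0) (hvpos : ∀ j, 0 < v j)
    (i : Fin (d + 1)) :
    ∃ μ : Fin (d + 1) → ℝ, (∀ j, j ≠ i → μ j < 0) ∧
      ∀ r, M r i = ∑ j ∈ Finset.univ.erase i, μ j * M r j := by
  refine ⟨fun j => -(v j / v i), fun j _ => by
    have := hvpos j; have := hvpos i; simp only [neg_neg]
    exact neg_neg_of_pos (div_pos (hvpos j) (hvpos i)) , ?_⟩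
  intro r
  have hvi := (hvpos i).ne'
  have hsum : M r i * v i + ∑ j ∈ Finset.univ.erase i, M r j * v j = 0 := by
    rw [Finset.add_sum_erase Finset.univ (fun j => M r j * v j) (Finset.mem_univ i)]
    have := congr_fun hv r
    simpa [Matrix.mulVec, dotProduct] using this
  have : ∑ j ∈ Finset.univ.erase i, -(v j / v i) * M r j
      = (-(1 / v i)) * ∑ j ∈ Finset.univ.erase i, M r j * v j := by
    rw [Finset.mul_sum]
    exact Finset.sum_congr rfl fun j _ => by ring
  rw [this]
  have h2 : ∑ j ∈ Finset.univ.erase i, M r j * v j = -(M r i * v i) := by linarith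
  rw [h2]
  field_simp

end StmtAux

open StmtAux in
theorem stmt0 (d : ℕ) (hd : 1 ≤ d) (M : Matrix (Fin d) (Fin (d + 1)) ℝ)
    (hrank : M.rank = d) :
    List.TFAE
      [ IsOriented M,
        ∀ A : Matrix (Fin d) (Fin d) ℝ, IsUnit A.det → IsOriented (A * M),
        ∀ σ : Equiv.Perm (Fin (d + 1)), IsOriented (M.submatrix id σ),
        ∀ v : Fin (d + 1) → ℝ, M.mulVec v = 0 → v ≠ 0 →
          ((∀ j, 0 < v j) ∨ (∀ j, v j < 0)),
        ∃ i : Fin (d + 1), ∃ μ : Fin (d + 1) → ℝ, (∀ j, j ≠ i → μ j < 0) ∧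
          ∀ r, M r i = ∑ j ∈ Finset.univ.erase i, μ j * M r j,
        ∀ i : Fin (d + 1), ∃ μ : Fin (d + 1) → ℝ, (∀ j, j ≠ i → μ j < 0) ∧
          ∀ r, M r i = ∑ j ∈ Finset.univ.erase i, μ j * M r j ] := by
  tfae_have 1 ↔ 4 := oriented_iff hrank
  tfae_have 1 → 2 := by
    intro h1 A hA
    have hdet : A.det ≠ 0 := hA.ne_zero
    rcases h1 with h | h <;> rcases hdet.lt_or_gt with hd' | hd'
    · right; intro i
      rw [colMinor_mul, show (-1 : ℝ) ^ (i : ℕ) * (A.det * colMinor M i)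
        = A.det * ((-1 : ℝ) ^ (i : ℕ) * colMinor M i) by ring]
      exact mul_neg_of_neg_of_pos hd' (h i)
    · left; intro i
      rw [colMinor_mul, show (-1 : ℝ) ^ (i : ℕ) * (A.det * colMinor M i)
        = A.det * ((-1 : ℝ) ^ (i : ℕ) * colMinor M i) by ring]
      exact mul_pos hd' (h i)
    · left; intro i
      rw [colMinor_mul, show (-1 : ℝ) ^ (i : ℕ) * (A.det * colMinor M i)
        = A.det * ((-1 : ℝ) ^ (i : ℕ) * colMinor M i) by ring]
      exact mul_pos_of_neg_of_neg hd' (h i)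
    · right; intro i
      rw [colMinor_mul, show (-1 : ℝ) ^ (i : ℕ) * (A.det * colMinor M i)
        = A.det * ((-1 : ℝ) ^ (i : ℕ) * colMinor M i) by ring]
      exact mul_neg_of_pos_of_neg hd' (h i)
  tfae_have 2 → 1 := by
    intro h
    have := h 1 (by simp)
    simpa using this
  tfae_have 1 → 3 := by
    intro h1 σ
    have h4 := (oriented_iff hrank).mp h1
    refine (oriented_iff (rank_perm hrank σ)).mpr ?_
    intro v hv hv0
    have hker : M.mulVec (fun j => v (σ.symm j)) = 0 := by
      rw [← mulVec_perm]; exact hv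
    have hnz : (fun j => v (σ.symm j)) ≠ 0 := by
      intro h
      apply hv0
      funext j
      have := congr_fun h (σ j)
      simpa using this
    rcases h4 _ hker hnz with h' | h'
    · left; intro j; simpa using h' (σ j)
    · right; intro j; simpa using h' (σ j)
  tfae_have 3 → 1 := by
    intro h
    have := h 1
    simpa using this
  tfae_have 4 → 6 := by
    intro h4 i
    obtain ⟨u, hu, hu0⟩ := exists_ker_nonzero hrank
    rcases h4 u hu hu0 with h | h
    · exact rep_of_kervec hu h i
    · have hu' : M.mulVec (-u) = 0 := by rw [Matrix.mulVec_neg, hu]; simp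
      exact rep_of_kervec hu' (fun j => neg_pos.mpr (h j)) i
  tfae_have 6 → 5 := fun h => ⟨0, h 0⟩
  tfae_have 5 → 4 := by
    rintro ⟨i, μ, hμ, hrep⟩
    obtain ⟨v, hv, hvpos⟩ := kervec_of_rep hμ hrep
    exact sign_prop hrank hv hvpos
  tfae_finish
end
end

section
/- Let d ≥ 1 and let M be a real d×(d+1) matrix of rank d with columns v_1, …, v_{d+1} ∈ ℝ^d. Then M is oriented if and only if the intersection of the half-spaces H_i^+ = {x ∈ ℝ^d : ⟨v_i, x⟩ ≥ 0}, i = 1,…,d+1, is reduced to the zero vector. -/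
open Matrix

noncomputable section

/-- The cofactor vector of a `d × (d+1)` matrix. -/
def cVec {d : ℕ} (M : Matrix (Fin d) (Fin (d + 1)) ℝ) : Fin (d + 1) → ℝ :=
  fun i => (-1 : ℝ) ^ (i : ℕ) * colMinor M i

lemma mulVec_cVec {d : ℕ} (M : Matrix (Fin d) (Fin (d + 1)) ℝ) :
    M *ᵥ cVec M = 0 := by
  funext r
  classical
  set N : Matrix (Fin (d + 1)) (Fin (d + 1)) ℝ := Matrix.of (Fin.cons (M r) M) with hN
  have h0 : N.det = 0 := by
    refine Matrix.det_zero_of_row_eq (Fin.succ_ne_zero r).symm ?_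
    funext j
    simp [hN]
    rfl
  have hsub : ∀ j : Fin (d + 1),
      N.submatrix Fin.succ j.succAbove = M.submatrix id j.succAbove := by
    intro j; ext a b; simp [hN]; rfl
  rw [Matrix.det_succ_row_zero] at h0
  simp only [hsub] at h0
  have : (M *ᵥ cVec M) r = ∑ j : Fin (d + 1),
      (-1 : ℝ) ^ (j : ℕ) * N 0 j * (M.submatrix id j.succAbove).det := by
    simp only [Matrix.mulVec, dotProduct, cVec, colMinor]
    refine Finset.sum_congr rfl fun j _ => ?_
    simp [hN]
    have hc : (Fin.cons (α := fun _ => Fin (d+1) → ℝ) (M r) M 0 j) = M r j := rfl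
    simp only [hc]
    ring
  rw [this, h0]
  rfl

lemma dot_cVec {d : ℕ} (M : Matrix (Fin d) (Fin (d + 1)) ℝ) (x : Fin d → ℝ) :
    cVec M ⬝ᵥ (Mᵀ *ᵥ x) = 0 := by
  rw [dotProduct_mulVec, Matrix.vecMul_transpose, mulVec_cVec, zero_dotProduct]

lemma mulVecT_inj {d : ℕ} (M : Matrix (Fin d) (Fin (d + 1)) ℝ) (hrank : M.rank = d)
    {x : Fin d → ℝ} (hx : Mᵀ *ᵥ x = 0) : x = 0 := by
  have h1 : Module.finrank ℝ (LinearMap.range Mᵀ.mulVecLin) = d := by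
    rw [← Matrix.rank, Matrix.rank_transpose]; exact hrank
  have h2 := LinearMap.finrank_range_add_finrank_ker Mᵀ.mulVecLin
  rw [h1, Module.finrank_fin_fun] at h2
  have hker : LinearMap.ker Mᵀ.mulVecLin = ⊥ :=
    Submodule.finrank_eq_zero.mp (by omega)
  have : x ∈ LinearMap.ker Mᵀ.mulVecLin := by
    rw [LinearMap.mem_ker, Matrix.mulVecLin_apply]
    exact hx
  rw [hker] at this
  simpa using this

lemma cVec_ne_zero {d : ℕ} (M : Matrix (Fin d) (Fin (d + 1)) ℝ) (hrank : M.rank = d) :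
    ∃ i, cVec M i ≠ 0 := by
  classical
  have h1 : Module.finrank ℝ (LinearMap.range M.mulVecLin) = d := hrank
  have h2 := LinearMap.finrank_range_add_finrank_ker M.mulVecLin
  rw [h1, Module.finrank_fin_fun] at h2
  have hker1 : Module.finrank ℝ (LinearMap.ker M.mulVecLin) = 1 := by omega
  have hne : LinearMap.ker M.mulVecLin ≠ ⊥ := by
    intro h; rw [h] at hker1; simp at hker1
  obtain ⟨u, hu, hu0⟩ := Submodule.exists_mem_ne_zero_of_ne_bot hne
  obtain ⟨i, hi⟩ : ∃ i, u i ≠ 0 := by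
    by_contra h; push_neg at h; exact hu0 (funext h)
  refine ⟨i, ?_⟩
  have hminor : colMinor M i ≠ 0 := by
    intro hdet
    obtain ⟨w, hw0, hw⟩ := (Matrix.exists_mulVec_eq_zero_iff).mpr hdet
    set w' : Fin (d + 1) → ℝ := i.insertNth 0 w with hw'
    have hMw : M *ᵥ w' = 0 := by
      funext r
      have h3 : (M *ᵥ w') r = ∑ k : Fin (d + 1), M r k * w' k := rfl
      rw [h3, Fin.sum_univ_succAbove _ i]
      simp only [hw', Fin.insertNth_apply_same, Fin.insertNth_apply_succAbove, mul_zero, zero_add]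
      have h4 : ∑ j : Fin d, M r (i.succAbove j) * w j = (M.submatrix id i.succAbove *ᵥ w) r := rfl
      rw [h4, hw]
    have hker' : w' ∈ LinearMap.ker M.mulVecLin := by
      rw [LinearMap.mem_ker, Matrix.mulVecLin_apply]
      exact hMw
    have hspan : LinearMap.ker M.mulVecLin = Submodule.span ℝ {u} := by
      symm
      refine Submodule.eq_of_le_of_finrank_eq ?_ ?_
      · rw [Submodule.span_le, Set.singleton_subset_iff]; exact hu
      · rw [finrank_span_singleton hu0, hker1]
    rw [hspan, Submodule.mem_span_singleton] at hker'
    obtain ⟨a, ha⟩ := hker'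
    have hai : a * u i = 0 := by
      have := congrFun ha i
      simp only [Pi.smul_apply, smul_eq_mul] at this
      rw [this, hw', Fin.insertNth_apply_same]
    have ha0 : a = 0 := by
      rcases mul_eq_zero.mp hai with h | h
      · exact h
      · exact absurd h hi
    apply hw0
    funext j
    have := congrFun ha (i.succAbove j)
    simp only [ha0, Pi.smul_apply, smul_eq_mul, zero_mul] at this
    rw [hw', Fin.insertNth_apply_succAbove] at this
    exact this.symm
  simp only [cVec]
  intro h
  rcases mul_eq_zero.mp h with h | h
  · exact absurd h (by positivity)
  · exact hminor h

lemma dot_single {n : ℕ} (c : Fin n → ℝ) (i : Fin n) :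
    c ⬝ᵥ Pi.single i (1 : ℝ) = c i := by
  simp [dotProduct, Pi.single_apply]

/-- the dot-product-with-c linear functional -/
def phi {d : ℕ} (M : Matrix (Fin d) (Fin (d + 1)) ℝ) : (Fin (d + 1) → ℝ) →ₗ[ℝ] ℝ where
  toFun y := cVec M ⬝ᵥ y
  map_add' y z := by simp [dotProduct_add]
  map_smul' a y := by simp [dotProduct_smul]

lemma surj_on_perp {d : ℕ} (M : Matrix (Fin d) (Fin (d + 1)) ℝ) (hrank : M.rank = d)
    {y : Fin (d + 1) → ℝ} (hy : cVec M ⬝ᵥ y = 0) : ∃ x, Mᵀ *ᵥ x = y := by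
  classical
  by_contra h
  push_neg at h
  have hyR : y ∉ LinearMap.range Mᵀ.mulVecLin := by
    rintro ⟨x, rfl⟩; exact h x rfl
  have h1 : Module.finrank ℝ (LinearMap.range Mᵀ.mulVecLin) = d := by
    rw [← Matrix.rank, Matrix.rank_transpose]; exact hrank
  set S := LinearMap.range Mᵀ.mulVecLin ⊔ Submodule.span ℝ {y} with hS
  have hlt : LinearMap.range Mᵀ.mulVecLin < S := by
    refine lt_of_le_of_ne le_sup_left fun he => hyR ?_
    rw [he, hS]
    exact Submodule.mem_sup_right (Submodule.mem_span_singleton_self y)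
  have hfin : Module.finrank ℝ S = d + 1 := by
    have hlow : d < Module.finrank ℝ S := by
      have := Submodule.finrank_lt_finrank_of_lt hlt
      rwa [h1] at this
    have hhigh : Module.finrank ℝ S ≤ d + 1 := by
      have := Submodule.finrank_le S
      rwa [Module.finrank_fin_fun] at this
    omega
  have htop : S = ⊤ := Submodule.eq_top_of_finrank_eq (by rw [hfin, Module.finrank_fin_fun])
  have hSker : S ≤ LinearMap.ker (phi M) := by
    rw [hS]
    refine sup_le ?_ ?_
    · rintro _ ⟨x, rfl⟩
      exact dot_cVec M x
    · rw [Submodule.span_le, Set.singleton_subset_iff]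
      exact hy
  obtain ⟨i, hi⟩ := cVec_ne_zero M hrank
  have : Pi.single i (1 : ℝ) ∈ LinearMap.ker (phi M) := hSker (htop ▸ Submodule.mem_top)
  rw [LinearMap.mem_ker] at this
  have hval : phi M (Pi.single i (1 : ℝ)) = cVec M i := by
    show cVec M ⬝ᵥ Pi.single i (1 : ℝ) = cVec M i
    exact dot_single _ _
  rw [hval] at this
  exact hi this

theorem stmt1 (d : ℕ) (hd : 1 ≤ d) (M : Matrix (Fin d) (Fin (d + 1)) ℝ)
    (hrank : M.rank = d) :
    IsOriented M ↔
      {x : Fin d → ℝ | ∀ i : Fin (d + 1), 0 ≤ ∑ r, M r i * x r} = {0} := by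
  classical
  have hsum : ∀ (x : Fin d → ℝ) (i : Fin (d + 1)), (∑ r, M r i * x r) = (Mᵀ *ᵥ x) i := by
    intro x i
    simp [Matrix.mulVec, dotProduct, Matrix.transpose_apply]
  constructor
  · intro hor
    ext x
    simp only [Set.mem_setOf_eq, Set.mem_singleton_iff]
    constructor
    · intro hx
      have hdot : ∑ i, cVec M i * (Mᵀ *ᵥ x) i = 0 := dot_cVec M x
      have hzero : ∀ i, (Mᵀ *ᵥ x) i = 0 := by
        rcases hor with hpos | hneg
        · intro i
          have hterm : ∀ j ∈ Finset.univ, (0:ℝ) ≤ cVec M j * (Mᵀ *ᵥ x) j := by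
            intro j _
            exact mul_nonneg (hpos j).le (by rw [← hsum]; exact hx j)
          have := (Finset.sum_eq_zero_iff_of_nonneg hterm).mp hdot i (Finset.mem_univ i)
          rcases mul_eq_zero.mp this with h | h
          · exact absurd h (hpos i).ne'
          · exact h
        · intro i
          have hterm : ∀ j ∈ Finset.univ, cVec M j * (Mᵀ *ᵥ x) j ≤ (0:ℝ) := by
            intro j _
            exact mul_nonpos_of_nonpos_of_nonneg (hneg j).le (by rw [← hsum]; exact hx j)
          have := (Finset.sum_eq_zero_iff_of_nonpos hterm).mp hdot i (Finset.mem_univ i)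
          rcases mul_eq_zero.mp this with h | h
          · exact absurd h (hneg i).ne
          · exact h
      exact mulVecT_inj M hrank (funext hzero)
    · rintro rfl
      intro i
      simp
  · intro hset
    have key : ∀ y : Fin (d + 1) → ℝ, (∀ i, 0 ≤ y i) → cVec M ⬝ᵥ y = 0 → y = 0 := by
      intro y hy hdot
      obtain ⟨x, hx⟩ := surj_on_perp M hrank hdot
      have hxmem : x ∈ {x : Fin d → ℝ | ∀ i : Fin (d + 1), 0 ≤ ∑ r, M r i * x r} := by
        intro i; rw [hsum, hx]; exact hy i
      rw [hset, Set.mem_singleton_iff] at hxmem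
      rw [hxmem] at hx
      rw [← hx]
      simp
    have hne : ∀ i, cVec M i ≠ 0 := by
      intro i hi
      have h5 := key (Pi.single i 1) (fun j => by
        rcases eq_or_ne j i with rfl | h
        · simp
        · rw [Pi.single_eq_of_ne h])
        (by rw [dot_single, hi])
      have h6 := congrFun h5 i
      simp at h6
    have hmix : ∀ i j, 0 < cVec M i → cVec M j < 0 → False := by
      intro i j hi hj
      have hij : i ≠ j := by rintro rfl; exact absurd hi (asymm hj)
      set y : Fin (d + 1) → ℝ :=
        cVec M i • (Pi.single j 1 : Fin (d + 1) → ℝ)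
          + (-(cVec M j)) • (Pi.single i 1 : Fin (d + 1) → ℝ) with hy
      have hynn : ∀ k, 0 ≤ y k := by
        intro k
        rw [hy]
        simp only [Pi.add_apply, Pi.smul_apply, smul_eq_mul]
        rcases eq_or_ne k j with rfl | hkj
        · rw [Pi.single_eq_same, Pi.single_eq_of_ne (Ne.symm hij)]
          simp only [mul_one, mul_zero, add_zero]
          linarith
        · rcases eq_or_ne k i with rfl | hki
          · rw [Pi.single_eq_of_ne hij, Pi.single_eq_same]
            simp only [mul_one, mul_zero, zero_add]
            linarith
          · rw [Pi.single_eq_of_ne hkj, Pi.single_eq_of_ne hki]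
            simp
      have hdot : cVec M ⬝ᵥ y = 0 := by
        rw [hy, dotProduct_add, dotProduct_smul, dotProduct_smul,
          dot_single, dot_single]
        simp only [smul_eq_mul]
        ring
      have hyi : y i = -(cVec M j) := by
        rw [hy]
        simp only [Pi.add_apply, Pi.smul_apply, smul_eq_mul]
        rw [Pi.single_eq_of_ne hij, Pi.single_eq_same]
        ring
      have h7 := congrFun (key y hynn hdot) i
      rw [hyi] at h7
      simp only [Pi.zero_apply] at h7
      linarith
    rcases lt_or_gt_of_ne (hne 0) with h0 | h0
    · right
      intro i
      rcases lt_or_gt_of_ne (hne i) with h | h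
      · exact h
      · exact absurd (hmix i 0 h h0) not_false
    · left
      intro i
      rcases lt_or_gt_of_ne (hne i) with h | h
      · exact absurd (hmix 0 i h0 h) not_false
      · exact h
end
end

section
/- Let A = {a_1, …, a_{d+1}} ⊂ ℤ^d and let Ã be the (d+1)×(d+1) matrix whose j-th column is (1, a_j) (a first row of ones, followed by the coordinates of the points). Assume Ã is invertible. Let C be a real d×(d+1) matrix and consider the Laurent polynomial system f_1(X) = ⋯ = f_d(X) = 0 where f_i(X) = Σ_{j=1}^{d+1} C_{ij} X^{a_j}. Then this system has a non-degenerate solution in the positive orthant (ℝ_{>0})^d if and only if C is oriented; moreover, when C is oriented, the system has exactly one solution in the positive orthant. -/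
open Matrix Finset

noncomputable section

lemma key_deriv {d : ℕ} (a : Fin (d+1) → Fin d → ℤ) (C : Matrix (Fin d) (Fin (d+1)) ℝ)
    (v : Fin d → ℝ) (hv : ∀ r, 0 < v r) :
    HasFDerivAt (𝕜 := ℝ) (fun x : Fin d → ℝ => fun i => ∑ j, C i j * ∏ r, x r ^ a j r)
      ((Matrix.toLin' (Matrix.of fun i r =>
          ∑ j, C i j * (a j r : ℝ) * (∏ s, v s ^ a j s) / v r)).toContinuousLinearMap) v := by
  have hg : ∀ j, HasFDerivAt (𝕜 := ℝ) (fun x : Fin d → ℝ => ∏ r, x r ^ a j r)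
      (∑ r, (∏ s ∈ Finset.univ.erase r, v s ^ a j s) •
        (((a j r : ℝ) * v r ^ (a j r - 1)) • ContinuousLinearMap.proj r)) v := by
    intro j
    exact HasFDerivAt.finset_prod (fun r _ =>
      by have h := (hasDerivAt_zpow (a j r) (v r) (Or.inl (hv r).ne')).comp_hasFDerivAt v
                    (hasFDerivAt_apply (𝕜 := ℝ) r v)
         exact h)
  have hcomp : ∀ i, HasFDerivAt (𝕜 := ℝ) (fun x : Fin d → ℝ => ∑ j, C i j * ∏ r, x r ^ a j r)
      (∑ j, C i j • (∑ r, (∏ s ∈ Finset.univ.erase r, v s ^ a j s) •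
        (((a j r : ℝ) * v r ^ (a j r - 1)) • ContinuousLinearMap.proj r))) v :=
    fun i => HasFDerivAt.fun_sum (fun j _ => (hg j).const_mul (C i j))
  have h2 : HasFDerivAt (𝕜 := ℝ)
      (fun x : Fin d → ℝ => fun i => ∑ j, C i j * ∏ r, x r ^ a j r)
      (ContinuousLinearMap.pi fun i => ∑ j, C i j • (∑ r,
        (∏ s ∈ Finset.univ.erase r, v s ^ a j s) •
        (((a j r : ℝ) * v r ^ (a j r - 1)) • ContinuousLinearMap.proj r))) v :=
    hasFDerivAt_pi.2 hcomp
  refine HasFDerivAt.congr_fderiv h2 (Eq.symm ?_)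
  ext u i
  simp only [LinearMap.coe_toContinuousLinearMap', Matrix.toLin'_apply,
    ContinuousLinearMap.pi_apply, ContinuousLinearMap.coe_sum', Finset.sum_apply,
    ContinuousLinearMap.coe_smul', Pi.smul_apply, ContinuousLinearMap.proj_apply,
    smul_eq_mul, Matrix.mulVec, dotProduct, Matrix.of_apply]
  simp_rw [Finset.mul_sum]
  rw [Finset.sum_comm]
  refine Finset.sum_congr rfl fun r _ => ?_
  rw [Finset.sum_mul]
  refine Finset.sum_congr rfl fun j _ => ?_
  have hvr : v r ≠ 0 := (hv r).ne'
  have hp : (∏ s, v s ^ a j s) = v r ^ a j r * ∏ s ∈ Finset.univ.erase r, v s ^ a j s :=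
    (Finset.mul_prod_erase _ _ (Finset.mem_univ r)).symm
  rw [hp, zpow_sub_one₀ hvr]
  field_simp

lemma det_cons_rows {d : ℕ} (C : Matrix (Fin d) (Fin (d+1)) ℝ) (z : Fin (d+1) → ℝ) :
    (Matrix.of (Fin.cons z C : Fin (d+1) → Fin (d+1) → ℝ)).det
      = ∑ j : Fin (d+1), (-1:ℝ)^(j:ℕ) * z j * colMinor C j := by
  rw [Matrix.det_succ_row_zero]
  refine Finset.sum_congr rfl fun j _ => ?_
  have : ((Matrix.of (Fin.cons z C : Fin (d+1) → Fin (d+1) → ℝ)).submatrix Fin.succ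
      j.succAbove) = C.submatrix id j.succAbove := by
    ext i k
    simp [Fin.cons_succ]
    rfl
  rw [this]
  rfl

lemma mulVec_w {d : ℕ} (C : Matrix (Fin d) (Fin (d+1)) ℝ) :
    C *ᵥ (fun j => (-1:ℝ)^(j:ℕ) * colMinor C j) = 0 := by
  funext k
  have h0 : (Matrix.of (Fin.cons (C k) C : Fin (d+1) → Fin (d+1) → ℝ)).det = 0 := by
    apply Matrix.det_zero_of_row_eq (i := 0) (j := k.succ) (Fin.succ_ne_zero k).symm
    show (Fin.cons (C k) C : Fin (d+1) → Fin (d+1) → ℝ) 0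
        = (Fin.cons (C k) C : Fin (d+1) → Fin (d+1) → ℝ) k.succ
    rfl
  rw [det_cons_rows] at h0
  calc (C *ᵥ fun j => (-1:ℝ)^(j:ℕ) * colMinor C j) k
      = ∑ j : Fin (d+1), (-1:ℝ)^(j:ℕ) * C k j * colMinor C j := by
        simp only [Matrix.mulVec, dotProduct]
        exact Finset.sum_congr rfl fun j _ => by ring
    _ = 0 := h0

lemma det_col_zero {d : ℕ} (X : Matrix (Fin (d+1)) (Fin (d+1)) ℝ)
    (h : ∀ i : Fin d, X i.succ 0 = 0) :
    X.det = X 0 0 * (X.submatrix Fin.succ Fin.succ).det := by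
  rw [Matrix.det_succ_column_zero, Fin.sum_univ_succ]
  simp [h, Fin.succAbove_zero]

lemma exp_zpow (x : ℝ) (n : ℤ) : Real.exp x ^ n = Real.exp (n * x) := by
  rw [← Real.rpow_intCast, Real.rpow_def_of_pos (Real.exp_pos x), Real.log_exp, mul_comm]

lemma detM_eq {d : ℕ} (C : Matrix (Fin d) (Fin (d+1)) ℝ) :
    (Matrix.of (Fin.cons (fun j : Fin (d+1) => (-1:ℝ)^(j:ℕ) * colMinor C j) C
      : Fin (d+1) → Fin (d+1) → ℝ)).det = ∑ j : Fin (d+1), (colMinor C j)^2 := by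
  rw [det_cons_rows]
  refine Finset.sum_congr rfl fun j _ => ?_
  have h1 : ((-1:ℝ))^(j:ℕ) * (-1:ℝ)^(j:ℕ) = 1 := by
    rw [← pow_add]
    exact Even.neg_one_pow ⟨(j:ℕ), rfl⟩
  nlinarith [h1]

lemma block_det {d : ℕ} (C : Matrix (Fin d) (Fin (d+1)) ℝ) (z y : Fin (d+1) → ℝ)
    (B : Matrix (Fin (d+1)) (Fin (d+1)) ℝ)
    (hB0 : ∀ j, B j 0 = y j) (hy : C *ᵥ y = 0) :
    (Matrix.of (Fin.cons z C : Fin (d+1) → Fin (d+1) → ℝ) * B).det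
      = (∑ j : Fin (d+1), z j * y j)
        * (Matrix.of (fun (i : Fin d) (r : Fin d) => ∑ j : Fin (d+1), C i j * B j r.succ)).det := by
  have hcol : ∀ i : Fin d,
      (Matrix.of (Fin.cons z C : Fin (d+1) → Fin (d+1) → ℝ) * B) i.succ 0 = 0 := by
    intro i
    have h1 := congrFun hy i
    simp only [Matrix.mulVec, dotProduct, Pi.zero_apply] at h1
    simp only [Matrix.mul_apply, Matrix.of_apply, Fin.cons_succ]
    rw [← h1]
    exact Finset.sum_congr rfl fun j _ => by rw [hB0]; rfl
  have h00 : (Matrix.of (Fin.cons z C : Fin (d+1) → Fin (d+1) → ℝ) * B) 0 0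
      = ∑ j : Fin (d+1), z j * y j := by
    simp only [Matrix.mul_apply, Matrix.of_apply, Fin.cons_zero]
    exact Finset.sum_congr rfl fun j _ => by rw [hB0]; rfl
  rw [det_col_zero _ hcol, h00]
  have hsub : ((Matrix.of (Fin.cons z C : Fin (d+1) → Fin (d+1) → ℝ) * B).submatrix
      Fin.succ Fin.succ)
      = Matrix.of (fun (i : Fin d) (r : Fin d) => ∑ j : Fin (d+1), C i j * B j r.succ) := by
    ext i r
    simp only [Matrix.submatrix_apply, Matrix.mul_apply, Matrix.of_apply, Fin.cons_succ]
    rfl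
  rw [hsub]

lemma kernel_char {d : ℕ} (C : Matrix (Fin d) (Fin (d+1)) ℝ)
    (hj : ∃ j, colMinor C j ≠ 0)
    (hCw : C *ᵥ (fun j : Fin (d+1) => (-1:ℝ)^(j:ℕ) * colMinor C j) = 0)
    (z : Fin (d+1) → ℝ) (hz : C *ᵥ z = 0) :
    ∃ t : ℝ, ∀ j, z j = t * ((-1:ℝ)^(j:ℕ) * colMinor C j) := by
  set w : Fin (d+1) → ℝ := fun j => (-1:ℝ)^(j:ℕ) * colMinor C j with hwdef
  set M : Matrix (Fin (d+1)) (Fin (d+1)) ℝ :=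
    Matrix.of (Fin.cons w C : Fin (d+1) → Fin (d+1) → ℝ) with hMdef
  have hsq : ∀ j, w j ^ 2 = colMinor C j ^ 2 := by
    intro j
    have h1 : ((-1:ℝ))^(j:ℕ) * (-1:ℝ)^(j:ℕ) = 1 := by
      rw [← pow_add]; exact Even.neg_one_pow ⟨(j:ℕ), rfl⟩
    simp only [hwdef]; nlinarith [h1]
  have hS : (0:ℝ) < ∑ j : Fin (d+1), (colMinor C j)^2 := by
    obtain ⟨j0, hj0⟩ := hj
    have : (0:ℝ) < colMinor C j0 ^ 2 := by positivity
    refine Finset.sum_pos' (fun j _ => by positivity) ⟨j0, Finset.mem_univ j0, this⟩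
  have hdetM : M.det ≠ 0 := by
    rw [hMdef, detM_eq]; exact ne_of_gt hS
  have hww : ∑ j : Fin (d+1), w j * w j = ∑ j : Fin (d+1), (colMinor C j)^2 := by
    refine Finset.sum_congr rfl fun j _ => ?_
    rw [← hsq j]; ring
  set t : ℝ := (∑ j : Fin (d+1), w j * z j) / (∑ j : Fin (d+1), (colMinor C j)^2) with htdef
  refine ⟨t, ?_⟩
  have hker : M *ᵥ (z - t • w) = 0 := by
    funext k
    refine Fin.cases ?_ ?_ k
    · simp only [Matrix.mulVec, dotProduct, Pi.sub_apply, Pi.smul_apply, smul_eq_mul,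
        hMdef, Matrix.of_apply, Fin.cons_zero, Pi.zero_apply]
      show ∑ j : Fin (d+1), w j * (z j - t * w j) = 0
      have expand : ∑ j : Fin (d+1), w j * (z j - t * w j)
          = (∑ j : Fin (d+1), w j * z j) - t * (∑ j : Fin (d+1), w j * w j) := by
        rw [Finset.mul_sum, ← Finset.sum_sub_distrib]
        exact Finset.sum_congr rfl fun j _ => by ring
      rw [expand, hww, htdef, div_mul_cancel₀ _ (ne_of_gt hS), sub_self]
    · intro i
      have h1 := congrFun hz i
      have h2 := congrFun hCw i
      simp only [Matrix.mulVec, dotProduct, Pi.zero_apply] at h1 h2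
      simp only [Matrix.mulVec, dotProduct, Pi.sub_apply, Pi.smul_apply, smul_eq_mul,
        hMdef, Matrix.of_apply, Fin.cons_succ, Pi.zero_apply]
      show ∑ j : Fin (d+1), C i j * (z j - t * w j) = 0
      have expand : ∑ j : Fin (d+1), C i j * (z j - t * w j)
          = (∑ j : Fin (d+1), C i j * z j) - t * (∑ j : Fin (d+1), C i j * w j) := by
        rw [Finset.mul_sum, ← Finset.sum_sub_distrib]
        exact Finset.sum_congr rfl fun j _ => by ring
      rw [expand, h1, h2, mul_zero, sub_zero]
  have hinj : Function.Injective (M.mulVec) :=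
    Matrix.mulVec_injective_iff_isUnit.2 ((Matrix.isUnit_iff_isUnit_det M).2
      (isUnit_iff_ne_zero.2 hdetM))
  have : z - t • w = 0 := hinj (by rw [hker, Matrix.mulVec_zero])
  intro j
  have := congrFun this j
  simp only [Pi.sub_apply, Pi.smul_apply, smul_eq_mul, Pi.zero_apply, sub_eq_zero] at this
  exact this


section
variable {d : ℕ} (a : Fin (d + 1) → Fin d → ℤ) (Atilde : Matrix (Fin (d + 1)) (Fin (d + 1)) ℝ)

lemma mulVecT (hAtilde : Atilde = Matrix.of (Fin.cons (fun _ => (1 : ℝ)) (fun r j => (a j r : ℝ))))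
    (u : Fin (d+1) → ℝ) (j : Fin (d+1)) :
    (Atildeᵀ *ᵥ u) j = u 0 + ∑ r : Fin d, (a j r : ℝ) * u r.succ := by
  simp only [Matrix.mulVec, dotProduct, Matrix.transpose_apply, hAtilde,
    Fin.sum_univ_succ, Matrix.of_apply, Fin.cons_zero, Fin.cons_succ, one_mul]

lemma solve_log (hAtilde : Atilde = Matrix.of (Fin.cons (fun _ => (1:ℝ)) (fun r j => (a j r : ℝ))))
    (hA : IsUnit Atilde.det) (g : Fin (d+1) → ℝ) (hg : ∀ j, 0 < g j) :
    ∃ v : Fin d → ℝ, (∀ r, 0 < v r) ∧ ∃ s : ℝ, 0 < s ∧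
      ∀ j, (∏ r, v r ^ a j r) = s * g j := by
  have hAT : IsUnit (Atildeᵀ).det := by rwa [Matrix.det_transpose]
  set u : Fin (d+1) → ℝ := (Atildeᵀ)⁻¹ *ᵥ (fun j => Real.log (g j)) with hu
  have hsolve : Atildeᵀ *ᵥ u = fun j => Real.log (g j) := by
    rw [hu, Matrix.mulVec_mulVec, Matrix.mul_nonsing_inv _ hAT, Matrix.one_mulVec]
  refine ⟨fun r => Real.exp (u r.succ), fun r => Real.exp_pos _,
    Real.exp (-(u 0)), Real.exp_pos _, fun j => ?_⟩
  have h1 : ∀ r : Fin d, Real.exp (u r.succ) ^ a j r = Real.exp ((a j r : ℝ) * u r.succ) :=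
    fun r => exp_zpow _ _
  calc (∏ r, Real.exp (u r.succ) ^ a j r)
      = ∏ r, Real.exp ((a j r : ℝ) * u r.succ) := by
        exact Finset.prod_congr rfl fun r _ => h1 r
    _ = Real.exp (∑ r, (a j r : ℝ) * u r.succ) := (Real.exp_sum _ _).symm
    _ = Real.exp ((Atildeᵀ *ᵥ u) j - u 0) := by
        rw [mulVecT a Atilde hAtilde]; ring_nf
    _ = Real.exp (-(u 0)) * g j := by
        rw [congrFun hsolve j, Real.exp_sub, Real.exp_log (hg j)]
        rw [Real.exp_neg]
        ring

lemma pos_sol_unique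
    (hAtilde : Atilde = Matrix.of (Fin.cons (fun _ => (1:ℝ)) (fun r j => (a j r : ℝ))))
    (hA : IsUnit Atilde.det) (v1 v2 : Fin d → ℝ)
    (hv1 : ∀ r, 0 < v1 r) (hv2 : ∀ r, 0 < v2 r) (ρ : ℝ) (hρ : 0 < ρ)
    (hY : ∀ j, (∏ r, v2 r ^ a j r) = ρ * ∏ r, v1 r ^ a j r) : v2 = v1 := by
  have hAT : IsUnit (Atildeᵀ).det := by rwa [Matrix.det_transpose]
  have hinj : Function.Injective ((Atildeᵀ).mulVec) :=
    Matrix.mulVec_injective_iff_isUnit.2 ((Matrix.isUnit_iff_isUnit_det _).2 hAT)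
  have hlog : ∀ (v : Fin d → ℝ), (∀ r, 0 < v r) → ∀ j,
      Real.log (∏ r, v r ^ a j r) = ∑ r, (a j r : ℝ) * Real.log (v r) := by
    intro v hv j
    rw [Real.log_prod (fun r _ => zpow_ne_zero _ (hv r).ne')]
    exact Finset.sum_congr rfl fun r _ => Real.log_zpow _ _
  set q : Fin (d+1) → ℝ := Fin.cons (-(Real.log ρ)) (fun r => Real.log (v2 r)) with hq
  set p : Fin (d+1) → ℝ := Fin.cons 0 (fun r => Real.log (v1 r)) with hp
  have heq : Atildeᵀ *ᵥ q = Atildeᵀ *ᵥ p := by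
    funext j
    rw [mulVecT a Atilde hAtilde, mulVecT a Atilde hAtilde]
    simp only [hq, hp, Fin.cons_zero, Fin.cons_succ]
    have h2 : ∑ r : Fin d, (a j r : ℝ) * Real.log (v2 r)
        = Real.log (∏ r, v2 r ^ a j r) := (hlog v2 hv2 j).symm
    have h1 : ∑ r : Fin d, (a j r : ℝ) * Real.log (v1 r)
        = Real.log (∏ r, v1 r ^ a j r) := (hlog v1 hv1 j).symm
    have hpos : (0:ℝ) < ∏ r, v1 r ^ a j r :=
      Finset.prod_pos fun r _ => zpow_pos (hv1 r) _
    rw [h2, h1, hY j, Real.log_mul hρ.ne' hpos.ne']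
    ring
  have hqp : q = p := hinj heq
  funext r
  have := congrFun hqp r.succ
  simp only [hq, hp, Fin.cons_succ] at this
  calc v2 r = Real.exp (Real.log (v2 r)) := (Real.exp_log (hv2 r)).symm
    _ = Real.exp (Real.log (v1 r)) := by rw [this]
    _ = v1 r := Real.exp_log (hv1 r)

end
theorem stmt2 (d : ℕ) (hd : 1 ≤ d) (a : Fin (d + 1) → Fin d → ℤ)
    (Atilde : Matrix (Fin (d + 1)) (Fin (d + 1)) ℝ)
    (hAtilde : Atilde = Matrix.of (Fin.cons (fun _ => (1 : ℝ)) (fun r j => (a j r : ℝ))))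
    (hA : IsUnit Atilde.det)
    (C : Matrix (Fin d) (Fin (d + 1)) ℝ)
    (F : (Fin d → ℝ) → (Fin d → ℝ))
    (hF : ∀ x i, F x i = ∑ j, C i j * ∏ r, x r ^ a j r) :
    ((∃ v : Fin d → ℝ, (∀ r, 0 < v r) ∧ F v = 0 ∧ (fderiv ℝ F v).det ≠ 0) ↔ IsOriented C)
    ∧ (IsOriented C → ∃! v : Fin d → ℝ, (∀ r, 0 < v r) ∧ F v = 0) := by
  have hFeq : F = fun x => fun i => ∑ j, C i j * ∏ r, x r ^ a j r :=
    funext fun x => funext fun i => hF x i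
  subst hFeq
  have hdetA : Atilde.det ≠ 0 := hA.ne_zero
  set w : Fin (d+1) → ℝ := fun j => (-1:ℝ)^(j:ℕ) * colMinor C j with hwdef
  have hCw : C *ᵥ w = 0 := mulVec_w C
  -- positivity of monomial vector
  have hYpos : ∀ (v : Fin d → ℝ), (∀ r, 0 < v r) → ∀ j, (0:ℝ) < ∏ r, v r ^ a j r :=
    fun v hv j => Finset.prod_pos fun r _ => zpow_pos (hv r) _
  -- solutions correspond to kernel elements
  have hsolker : ∀ (v : Fin d → ℝ),
      (fun i => ∑ j, C i j * ∏ r, v r ^ a j r) = (0 : Fin d → ℝ) ↔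
        C *ᵥ (fun j => ∏ r, v r ^ a j r) = 0 := fun v => Iff.rfl
  -- the matrix B = diagonal y * Atildeᵀ
  have hB0 : ∀ (y : Fin (d+1) → ℝ) (j : Fin (d+1)),
      (Matrix.diagonal y * Atildeᵀ) j 0 = y j := by
    intro y j
    simp [Matrix.diagonal_mul, hAtilde]
  have hBs : ∀ (y : Fin (d+1) → ℝ) (j : Fin (d+1)) (r : Fin d),
      (Matrix.diagonal y * Atildeᵀ) j r.succ = y j * (a j r : ℝ) := by
    intro y j r
    simp [Matrix.diagonal_mul, hAtilde, Fin.cons_succ]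
  -- unified block identity
  have hblock : ∀ (z y : Fin (d+1) → ℝ), C *ᵥ y = 0 →
      (Matrix.of (Fin.cons z C : Fin (d+1) → Fin (d+1) → ℝ)).det
          * ((∏ j, y j) * Atilde.det)
        = (∑ j : Fin (d+1), z j * y j)
          * (Matrix.of (fun (i : Fin d) (r : Fin d) =>
              ∑ j : Fin (d+1), C i j * (y j * (a j r : ℝ)))).det := by
    intro z y hy
    have h1 := block_det C z y (Matrix.diagonal y * Atildeᵀ) (hB0 y) hy
    rw [Matrix.det_mul, Matrix.det_mul, Matrix.det_diagonal, Matrix.det_transpose] at h1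
    have h2 : (Matrix.of fun (i : Fin d) (r : Fin d) =>
          ∑ j : Fin (d+1), C i j * (Matrix.diagonal y * Atildeᵀ) j r.succ)
        = Matrix.of (fun (i : Fin d) (r : Fin d) =>
          ∑ j : Fin (d+1), C i j * (y j * (a j r : ℝ))) := by
      ext i r
      simp only [Matrix.of_apply]
      exact Finset.sum_congr rfl fun j _ => by rw [hBs]
    rw [h2, ← mul_assoc] at h1
    rw [← h1]
    ring
  -- determinant of the Jacobian at positive v
  have hKdet : ∀ (v : Fin d → ℝ) (hv : ∀ r, 0 < v r),
      (fderiv ℝ (fun x (i : Fin d) => ∑ j, C i j * ∏ r, x r ^ a j r) v).det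
        = (Matrix.of (fun (i : Fin d) (r : Fin d) =>
            ∑ j : Fin (d+1), C i j * ((∏ s, v s ^ a j s) * (a j r : ℝ)))).det
          * ∏ r, (v r)⁻¹ := by
    intro v hv
    rw [(key_deriv a C v hv).fderiv]
    have hcoe : ((Matrix.toLin' (Matrix.of fun i r =>
        ∑ j, C i j * (a j r : ℝ) * (∏ s, v s ^ a j s) / v r)).toContinuousLinearMap).det
        = (Matrix.of fun (i : Fin d) (r : Fin d) =>
            ∑ j, C i j * (a j r : ℝ) * (∏ s, v s ^ a j s) / v r).det := by
      show LinearMap.det _ = _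
      rw [LinearMap.coe_toContinuousLinearMap, LinearMap.det_toLin']
    rw [hcoe]
    have hJm : (Matrix.of fun (i : Fin d) (r : Fin d) =>
          ∑ j, C i j * (a j r : ℝ) * (∏ s, v s ^ a j s) / v r)
        = (Matrix.of (fun (i : Fin d) (r : Fin d) =>
            ∑ j : Fin (d+1), C i j * ((∏ s, v s ^ a j s) * (a j r : ℝ))))
          * Matrix.diagonal (fun r => (v r)⁻¹) := by
      ext i r
      simp only [Matrix.of_apply, Matrix.mul_diagonal]
      rw [Finset.sum_mul]
      exact Finset.sum_congr rfl fun j _ => by rw [div_eq_mul_inv]; ring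
    rw [hJm, Matrix.det_mul, Matrix.det_diagonal]
  -- determinant of matrix with first row z on top of C
  have hdetP : ∀ z : Fin (d+1) → ℝ,
      (Matrix.of (Fin.cons z C : Fin (d+1) → Fin (d+1) → ℝ)).det
        = ∑ j : Fin (d+1), w j * z j := by
    intro z
    rw [det_cons_rows]
    exact Finset.sum_congr rfl fun j _ => by rw [hwdef]; ring
  -- existence-uniqueness-nondegeneracy package from orientedness
  have hexists : IsOriented C → ∃ v : Fin d → ℝ, (∀ r, 0 < v r) ∧
      (fun i => ∑ j, C i j * ∏ r, v r ^ a j r) = (0 : Fin d → ℝ) ∧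
      (fderiv ℝ (fun x (i : Fin d) => ∑ j, C i j * ∏ r, x r ^ a j r) v).det ≠ 0 ∧
      ∀ v2 : Fin d → ℝ, (∀ r, 0 < v2 r) →
        (fun i => ∑ j, C i j * ∏ r, v2 r ^ a j r) = (0 : Fin d → ℝ) → v2 = v := by
    intro hOr
    obtain ⟨ε, hεne, hεw⟩ : ∃ ε : ℝ, ε ≠ 0 ∧ ∀ j, 0 < ε * w j := by
      rcases hOr with h | h
      · exact ⟨1, one_ne_zero, fun j => by simpa using h j⟩
      · refine ⟨-1, by norm_num, fun j => ?_⟩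
        have := neg_pos.2 (h j)
        simpa [neg_mul] using this
    have hcj : ∃ j, colMinor C j ≠ 0 := by
      refine ⟨0, fun hc => ?_⟩
      have h0 := hεw 0
      rw [hwdef] at h0
      simp [hc] at h0
    obtain ⟨v, hv, s, hs, hYs⟩ := solve_log a Atilde hAtilde hA (fun j => ε * w j) hεw
    have hy0 : C *ᵥ (fun j => ∏ r, v r ^ a j r) = 0 := by
      funext i
      have h1 := congrFun hCw i
      simp only [Matrix.mulVec, dotProduct, Pi.zero_apply] at h1 ⊢
      calc ∑ j, C i j * ∏ r, v r ^ a j r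
          = ∑ j, C i j * (s * (ε * w j)) :=
            Finset.sum_congr rfl fun j _ => by rw [hYs j]
        _ = s * ε * ∑ j, C i j * w j := by
            rw [Finset.mul_sum]; exact Finset.sum_congr rfl fun j _ => by ring
        _ = 0 := by rw [h1, mul_zero]
    have hF0 : (fun i => ∑ j, C i j * ∏ r, v r ^ a j r) = (0 : Fin d → ℝ) :=
      (hsolker v).2 hy0
    have hMne : (Matrix.of (Fin.cons w C : Fin (d+1) → Fin (d+1) → ℝ)).det ≠ 0 := by
      rw [hwdef, detM_eq]
      obtain ⟨j0, hj0⟩ := hcj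
      have : (0:ℝ) < ∑ j : Fin (d+1), (colMinor C j)^2 :=
        Finset.sum_pos' (fun j _ => sq_nonneg _) ⟨j0, Finset.mem_univ j0, by positivity⟩
      exact this.ne'
    have hI := hblock w (fun j => ∏ r, v r ^ a j r) hy0
    have hLne : (Matrix.of (Fin.cons w C : Fin (d+1) → Fin (d+1) → ℝ)).det
        * ((∏ j, ∏ r, v r ^ a j r) * Atilde.det) ≠ 0 :=
      mul_ne_zero hMne (mul_ne_zero
        (Finset.prod_pos fun j _ => hYpos v hv j).ne' hdetA)
    have hKne : (Matrix.of (fun (i : Fin d) (r : Fin d) =>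
        ∑ j : Fin (d+1), C i j * ((∏ s, v s ^ a j s) * (a j r : ℝ)))).det ≠ 0 := by
      rw [hI] at hLne
      exact right_ne_zero_of_mul hLne
    have hJ : (fderiv ℝ (fun x (i : Fin d) => ∑ j, C i j * ∏ r, x r ^ a j r) v).det ≠ 0 := by
      rw [hKdet v hv]
      exact mul_ne_zero hKne
        (Finset.prod_pos fun r _ => inv_pos.2 (hv r)).ne'
    refine ⟨v, hv, hF0, hJ, ?_⟩
    intro v2 hv2 hF02
    have hy02 : C *ᵥ (fun j => ∏ r, v2 r ^ a j r) = 0 := (hsolker v2).1 hF02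
    obtain ⟨t2, ht2⟩ := kernel_char C hcj hCw _ hy02
    have hst : ∀ j, (∏ r, v r ^ a j r) = (s*ε) * w j := fun j => by rw [hYs j]; ring
    have hρY : ∀ j, (∏ r, v2 r ^ a j r) = (t2/(s*ε)) * ∏ r, v r ^ a j r := by
      intro j
      rw [hst j, ht2 j, hwdef]
      have hne : s * ε ≠ 0 := mul_ne_zero hs.ne' hεne
      field_simp
    have hρpos : 0 < t2/(s*ε) := by
      have h1 : t2/(s*ε) = (∏ r, v2 r ^ a 0 r) / (∏ r, v r ^ a 0 r) := by
        rw [eq_div_iff (hYpos v hv 0).ne']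
        exact (hρY 0).symm
      rw [h1]
      exact div_pos (hYpos v2 hv2 0) (hYpos v hv 0)
    exact pos_sol_unique a Atilde hAtilde hA v v2 hv hv2 _ hρpos hρY
  constructor
  · constructor
    · rintro ⟨v, hv, hF0, hJ⟩
      have hy0 : C *ᵥ (fun j => ∏ r, v r ^ a j r) = 0 := (hsolker v).1 hF0
      rw [hKdet v hv] at hJ
      have hKne : (Matrix.of (fun (i : Fin d) (r : Fin d) =>
          ∑ j : Fin (d+1), C i j * ((∏ s, v s ^ a j s) * (a j r : ℝ)))).det ≠ 0 :=
        left_ne_zero_of_mul hJ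
      have hyy : (0:ℝ) < ∑ j : Fin (d+1), (∏ r, v r ^ a j r) * (∏ r, v r ^ a j r) :=
        Finset.sum_pos (fun j _ => mul_pos (hYpos v hv j) (hYpos v hv j))
          Finset.univ_nonempty
      have hII := hblock (fun j => ∏ r, v r ^ a j r) (fun j => ∏ r, v r ^ a j r) hy0
      rw [hdetP] at hII
      have hwy : (∑ j : Fin (d+1), w j * (∏ r, v r ^ a j r)) ≠ 0 := by
        intro h0
        rw [h0, zero_mul] at hII
        exact (mul_ne_zero hyy.ne' hKne) hII.symm
      have hI := hblock w (fun j => ∏ r, v r ^ a j r) hy0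
      have hMne : (Matrix.of (Fin.cons w C : Fin (d+1) → Fin (d+1) → ℝ)).det ≠ 0 := by
        intro h0
        rw [h0, zero_mul] at hI
        exact (mul_ne_zero hwy hKne) hI.symm
      have hcj : ∃ j, colMinor C j ≠ 0 := by
        by_contra h
        push_neg at h
        apply hMne
        rw [hwdef, detM_eq]
        exact Finset.sum_eq_zero fun j _ => by rw [h j]; ring
      obtain ⟨t, ht⟩ := kernel_char C hcj hCw _ hy0
      have htne : t ≠ 0 := by
        intro h0
        have h1 := ht 0
        rw [h0, zero_mul] at h1
        exact (hYpos v hv 0).ne' h1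
      rcases lt_or_gt_of_ne htne with hneg | hpos
      · right
        intro j
        have h1 : (-1:ℝ)^(j:ℕ) * colMinor C j = (∏ r, v r ^ a j r) / t := by
          rw [ht j]
          field_simp
        rw [h1]
        exact div_neg_of_pos_of_neg (hYpos v hv j) hneg
      · left
        intro j
        have h1 : (-1:ℝ)^(j:ℕ) * colMinor C j = (∏ r, v r ^ a j r) / t := by
          rw [ht j]
          field_simp
        rw [h1]
        exact div_pos (hYpos v hv j) hpos
    · intro hOr
      obtain ⟨v, hv, hF0, hJ, _⟩ := hexists hOr
      exact ⟨v, hv, hF0, hJ⟩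
  · intro hOr
    obtain ⟨v, hv, hF0, _, huniq⟩ := hexists hOr
    exact ⟨v, ⟨hv, hF0⟩, fun v2 h2 => huniq v2 h2.1 h2.2⟩
end
end

section
/- Let τ be a d-simplex in ℝ^d with affinely independent vertices a_1, …, a_{d+1}, let a be any point in the interior of τ, and let D_τ be the d×(d+1) matrix with columns a_1 − a, a_2 − a, …, a_{d+1} − a. Then: (i) D_τ is oriented; (ii) a real d×(d+1) matrix C is oriented if and only if either minor(C,i)·minor(D_τ,i) > 0 for all i ∈ {1,…,d+1}, or minor(C,i)·minor(D_τ,i) < 0 for all i ∈ {1,…,d+1}. -/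
open Matrix

noncomputable section

/-- The cofactor vector of a `d × (d+1)` matrix lies in the kernel. -/
lemma cofactor_rel {d : ℕ} (M : Matrix (Fin d) (Fin (d + 1)) ℝ) (r : Fin d) :
    ∑ j : Fin (d + 1), (-1 : ℝ) ^ (j : ℕ) * colMinor M j * M r j = 0 := by
  let N : Matrix (Fin (d + 1)) (Fin (d + 1)) ℝ := Matrix.of (Fin.cons (M r) M)
  have hdet : N.det = 0 := by
    refine Matrix.det_zero_of_row_eq (i := 0) (j := r.succ) (Fin.succ_ne_zero r).symm ?_
    ext j
    simp [N]
    rfl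
  rw [Matrix.det_succ_row_zero] at hdet
  rw [← hdet]
  refine Finset.sum_congr rfl fun j _ => ?_
  have h1 : N 0 j = M r j := by simp [N]; rfl
  have h2 : N.submatrix Fin.succ j.succAbove = M.submatrix id j.succAbove := by
    ext k l
    simp [N, Matrix.submatrix]
    rfl
  rw [h1, h2, colMinor]
  ring

lemma orient_iff_aux {ι : Type*} (f e : ι → ℝ) (he : (∀ i, 0 < e i) ∨ (∀ i, e i < 0)) :
    ((∀ i, 0 < f i) ∨ (∀ i, f i < 0)) ↔ ((∀ i, 0 < f i * e i) ∨ (∀ i, f i * e i < 0)) := by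
  rcases he with he | he
  · constructor
    · rintro (h | h)
      · exact Or.inl fun i => mul_pos (h i) (he i)
      · exact Or.inr fun i => mul_neg_of_neg_of_pos (h i) (he i)
    · rintro (h | h)
      · exact Or.inl fun i => by nlinarith [h i, he i]
      · exact Or.inr fun i => by nlinarith [h i, he i]
  · constructor
    · rintro (h | h)
      · exact Or.inr fun i => mul_neg_of_pos_of_neg (h i) (he i)
      · exact Or.inl fun i => mul_pos_of_neg_of_neg (h i) (he i)
    · rintro (h | h)
      · exact Or.inr fun i => by nlinarith [h i, he i]
      · exact Or.inl fun i => by nlinarith [h i, he i]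

theorem stmt5 (d : ℕ) (hd : 1 ≤ d) (a : Fin (d + 1) → Fin d → ℝ)
    (hindep : AffineIndependent ℝ a)
    (p : Fin d → ℝ) (hp : p ∈ interior (convexHull ℝ (Set.range a)))
    (D : Matrix (Fin d) (Fin (d + 1)) ℝ) (hD : ∀ r i, D r i = a i r - p r) :
    IsOriented D ∧
      ∀ C : Matrix (Fin d) (Fin (d + 1)) ℝ,
        (IsOriented C ↔
          ((∀ i, 0 < colMinor C i * colMinor D i) ∨
           (∀ i, colMinor C i * colMinor D i < 0))) := by
  classical
  have hfr : Module.finrank ℝ (Fin d → ℝ) = d := by simp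
  have htop : affineSpan ℝ (Set.range a) = ⊤ := by
    rw [hindep.affineSpan_eq_top_iff_card_eq_finrank_add_one]
    simp [hfr]
  let b : AffineBasis (Fin (d + 1)) ℝ (Fin d → ℝ) := ⟨a, hindep, htop⟩
  set w : Fin (d + 1) → ℝ := fun i => b.coord i p with hwdef
  have hwpos : ∀ i, 0 < w i := by
    have hb : (⇑b : Fin (d + 1) → Fin d → ℝ) = a := rfl
    rw [show Set.range a = Set.range ⇑b from by rw [hb]] at hp
    rw [b.interior_convexHull] at hp
    exact hp
  have hw0 : w ≠ 0 := by
    intro h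
    have h0 := hwpos 0
    rw [h] at h0
    simp at h0
  have hcomb : ∑ i, w i • a i = p := b.linear_combination_coord_eq_self p
  have hkerw : D.mulVec w = 0 := by
    ext r
    have hr := congrFun hcomb r
    simp only [Finset.sum_apply, Pi.smul_apply, smul_eq_mul] at hr
    have hsum1 : ∑ i, w i = 1 := b.sum_coord_apply_eq_one p
    simp only [Matrix.mulVec, dotProduct, hD, Pi.zero_apply]
    have hre : ∑ i, (a i r - p r) * w i = ∑ i, w i * a i r - (∑ i, w i) * p r := by
      rw [Finset.sum_mul, ← Finset.sum_sub_distrib]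
      exact Finset.sum_congr rfl fun i _ => by ring
    rw [hre, hsum1, hr]
    ring
  have hkerwvec : ∑ j, w j • Dᵀ j = 0 := by
    ext r
    have hr := congrFun hkerw r
    simp only [Matrix.mulVec, dotProduct, Pi.zero_apply] at hr
    simp only [Finset.sum_apply, Pi.smul_apply, smul_eq_mul, Matrix.transpose_apply,
      Pi.zero_apply]
    rw [← hr]
    exact Finset.sum_congr rfl fun j _ => mul_comm _ _
  have hcol : ∀ i, Dᵀ i = a i - p := by
    intro i; ext r; simp [Matrix.transpose_apply, hD]
  have hspan : Submodule.span ℝ (Set.range Dᵀ) = ⊤ := by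
    have hvs : vectorSpan ℝ (Set.range a) = ⊤ := by
      rw [← direction_affineSpan, htop, AffineSubspace.direction_top]
    rw [eq_top_iff, ← hvs, vectorSpan_def, Submodule.span_le]
    rintro x ⟨u, ⟨i, rfl⟩, v, ⟨j, rfl⟩, rfl⟩
    show a i -ᵥ a j ∈ _
    have hx : a i -ᵥ a j = Dᵀ i - Dᵀ j := by
      rw [hcol, hcol]; ext r; simp
    rw [hx]
    exact sub_mem (Submodule.subset_span ⟨i, rfl⟩) (Submodule.subset_span ⟨j, rfl⟩)
  have hminor : ∀ i, colMinor D i ≠ 0 := by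
    intro i
    set S : Matrix (Fin d) (Fin d) ℝ := D.submatrix id i.succAbove with hS
    have hScol : ∀ j, Sᵀ j = Dᵀ (i.succAbove j) := fun j => rfl
    have hSspan : Submodule.span ℝ (Set.range Sᵀ) = ⊤ := by
      rw [eq_top_iff, ← hspan, Submodule.span_le]
      rintro x ⟨k, rfl⟩
      by_cases hk : k = i
      · subst hk
        have hsplit : w k • Dᵀ k = -(∑ j : Fin d, w (k.succAbove j) • Dᵀ (k.succAbove j)) := by
          refine eq_neg_of_add_eq_zero_left ?_
          rw [← Fin.sum_univ_succAbove (fun j => w j • Dᵀ j) k]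
          exact hkerwvec
        have hmem : w k • Dᵀ k ∈ Submodule.span ℝ (Set.range Sᵀ) := by
          rw [hsplit]
          exact neg_mem (Submodule.sum_mem _ fun j _ =>
            Submodule.smul_mem _ _ (Submodule.subset_span ⟨j, (hScol j).symm ▸ rfl⟩))
        have hsm := Submodule.smul_mem _ (w k)⁻¹ hmem
        rwa [smul_smul, inv_mul_cancel₀ (ne_of_gt (hwpos k)), one_smul] at hsm
      · obtain ⟨j, rfl⟩ := Fin.exists_succAbove_eq hk
        exact Submodule.subset_span ⟨j, hScol j⟩
    have hsurj : Function.Surjective S.mulVecLin := by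
      rw [← LinearMap.range_eq_top, Matrix.range_mulVecLin]; exact hSspan
    have hinj : Function.Injective S.mulVecLin :=
      LinearMap.injective_iff_surjective.mpr hsurj
    intro hdet0
    obtain ⟨u, hu, hu0⟩ := Matrix.exists_mulVec_eq_zero_iff.mpr hdet0
    exact hu (hinj (by simpa [Matrix.mulVecLin_apply] using hu0))
  -- the cofactor vector
  set v : Fin (d + 1) → ℝ := fun j => (-1 : ℝ) ^ (j : ℕ) * colMinor D j with hvdef
  have hkerv : D.mulVec v = 0 := by
    ext r
    simp only [Matrix.mulVec, dotProduct, Pi.zero_apply]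
    rw [← cofactor_rel D r]
    exact Finset.sum_congr rfl fun j _ => mul_comm _ _
  have hrange : LinearMap.range D.mulVecLin = ⊤ := by
    rw [Matrix.range_mulVecLin]; exact hspan
  have hkdim : Module.finrank ℝ (LinearMap.ker D.mulVecLin) = 1 := by
    have h := LinearMap.finrank_range_add_finrank_ker D.mulVecLin
    rw [hrange] at h
    simp only [finrank_top, hfr] at h
    simp only [Module.finrank_fintype_fun_eq_card, Fintype.card_fin] at h
    omega
  have hwK : w ∈ LinearMap.ker D.mulVecLin := by
    rw [LinearMap.mem_ker]; simpa [Matrix.mulVecLin_apply] using hkerw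
  have hvK : v ∈ LinearMap.ker D.mulVecLin := by
    rw [LinearMap.mem_ker]; simpa [Matrix.mulVecLin_apply] using hkerv
  have hspanw : Submodule.span ℝ {w} = LinearMap.ker D.mulVecLin := by
    apply Submodule.eq_of_le_of_finrank_le
    · rw [Submodule.span_le]; simpa using hwK
    · rw [hkdim, finrank_span_singleton hw0]
  obtain ⟨c, hc⟩ := Submodule.mem_span_singleton.mp (hspanw ▸ hvK)
  have hvi : ∀ i : Fin (d + 1), (-1 : ℝ) ^ (i : ℕ) * colMinor D i = c * w i := by
    intro i
    have := congrFun hc.symm i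
    simpa [hvdef] using this
  have hc0 : c ≠ 0 := by
    intro h
    apply hminor 0
    have h0 := hvi 0
    rw [h, zero_mul] at h0
    simpa using h0
  have he : (∀ i, 0 < c * w i) ∨ (∀ i, c * w i < 0) := by
    rcases hc0.lt_or_gt with h | h
    · exact Or.inr fun i => mul_neg_of_neg_of_pos h (hwpos i)
    · exact Or.inl fun i => mul_pos h (hwpos i)
  have hDor : IsOriented D := by
    rcases he with h | h
    · exact Or.inl fun i => by rw [hvi i]; exact h i
    · exact Or.inr fun i => by rw [hvi i]; exact h i
  refine ⟨hDor, fun C => ?_⟩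
  have key := orient_iff_aux (fun i : Fin (d + 1) => (-1 : ℝ) ^ (i : ℕ) * colMinor C i)
    (fun i => c * w i) he
  have hpe : ∀ i : Fin (d + 1),
      ((-1 : ℝ) ^ (i : ℕ) * colMinor C i) * (c * w i) = colMinor C i * colMinor D i := by
    intro i
    rw [← hvi i]
    have h1 : ((-1 : ℝ) ^ (i : ℕ)) * ((-1 : ℝ) ^ (i : ℕ)) = 1 := by
      rw [← mul_pow]; norm_num
    calc ((-1 : ℝ) ^ (i : ℕ) * colMinor C i) * ((-1 : ℝ) ^ (i : ℕ) * colMinor D i)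
        = (((-1 : ℝ) ^ (i : ℕ)) * ((-1 : ℝ) ^ (i : ℕ))) * (colMinor C i * colMinor D i) := by
          ring
      _ = colMinor C i * colMinor D i := by rw [h1, one_mul]
  simp only [hpe] at key
  exact key
end
end

section
/- Let a_1, …, a_d, a_{d+1}, a_{d+2} be points of ℝ^d such that τ = conv(a_1,…,a_d,a_{d+1}) and τ′ = conv(a_1,…,a_d,a_{d+2}) are two d-simplices sharing the common facet conv(a_1,…,a_d). Choose interior points p ∈ int(τ) and p′ ∈ int(τ′), and let D_τ (resp. D_{τ′}) be the d×(d+1) matrix with columns a_1 − p, …, a_d − p, a_{d+1} − p (resp. a_1 − p′, …, a_d − p′, a_{d+2} − p′). Let C be a real d×(d+2) matrix such that the submatrix C_τ formed by columns 1,…,d,d+1 and the submatrix C_{τ′} formed by columns 1,…,d,d+2 are both oriented. If minor(C_τ,i)·minor(D_τ,i) > 0 for all i ∈ {1,…,d+1}, then minor(C_{τ′},i)·minor(D_{τ′},i) < 0 for all i ∈ {1,…,d+1}. -/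
open Matrix

noncomputable section

open Finset

set_option maxHeartbeats 1000000

lemma cofactor_sum_eq_zero {d : ℕ} (M : Matrix (Fin d) (Fin (d + 1)) ℝ) (r : Fin d) :
    ∑ i : Fin (d + 1), (-1 : ℝ) ^ (i : ℕ) * M r i * colMinor M i = 0 := by
  classical
  set N : Matrix (Fin (d + 1)) (Fin (d + 1)) ℝ := Matrix.of (Fin.cons (M r) M) with hN
  have hdet : N.det = 0 := by
    refine Matrix.det_zero_of_row_eq (i := 0) (j := r.succ) (Fin.succ_ne_zero r).symm ?_
    funext j
    simp [hN]
    rfl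
  have hsub : ∀ j : Fin (d + 1), N.submatrix Fin.succ j.succAbove = M.submatrix id j.succAbove := by
    intro j
    ext a c
    simp [hN]
    rfl
  calc ∑ i : Fin (d + 1), (-1 : ℝ) ^ (i : ℕ) * M r i * colMinor M i
      = ∑ j : Fin (d + 1), (-1 : ℝ) ^ (j : ℕ) * N 0 j * (N.submatrix Fin.succ j.succAbove).det := by
        refine Finset.sum_congr rfl fun j _ => ?_
        rw [hsub j]
        simp [hN, colMinor]
        left; rfl
    _ = N.det := (Matrix.det_succ_row_zero N).symm
    _ = 0 := hdet

lemma minor_mul_eq {d : ℕ} (M : Matrix (Fin d) (Fin (d + 1)) ℝ) (w : Fin (d + 1) → ℝ)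
    (hw : ∀ i, 0 < w i) (hker : ∀ r, ∑ i, w i * M r i = 0) (i₀ : Fin (d + 1))
    (h₀ : colMinor M i₀ ≠ 0) (i : Fin (d + 1)) :
    (-1 : ℝ) ^ (i : ℕ) * colMinor M i * w i₀ = (-1 : ℝ) ^ (i₀ : ℕ) * colMinor M i₀ * w i := by
  classical
  set u : Fin (d + 1) → ℝ := fun k => (-1 : ℝ) ^ (k : ℕ) * colMinor M k with hu
  set z : Fin (d + 1) → ℝ := fun k => w i₀ * u k - u i₀ * w k with hzdef
  have hz0 : z i₀ = 0 := by simp [hzdef]; ring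
  have hzker : ∀ r, ∑ k, M r k * z k = 0 := by
    intro r
    have h1 : ∑ k, M r k * u k = 0 := by
      rw [← cofactor_sum_eq_zero M r]
      exact Finset.sum_congr rfl fun k _ => by simp [hu]; ring
    have h2 : ∑ k, M r k * w k = 0 := by
      rw [← hker r]
      exact Finset.sum_congr rfl fun k _ => by ring
    have : ∀ k, M r k * z k = w i₀ * (M r k * u k) - u i₀ * (M r k * w k) := by
      intro k; simp [hzdef]; ring
    rw [Finset.sum_congr rfl fun k _ => this k, Finset.sum_sub_distrib, ← Finset.mul_sum,
      ← Finset.mul_sum, h1, h2]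
    ring
  set N₀ : Matrix (Fin d) (Fin d) ℝ := M.submatrix id i₀.succAbove with hN₀
  have hdet : N₀.det ≠ 0 := h₀
  have hmv : N₀.mulVec (fun j => z (i₀.succAbove j)) = 0 := by
    funext r
    have := hzker r
    rw [Fin.sum_univ_succAbove (fun k => M r k * z k) i₀, hz0, mul_zero, zero_add] at this
    simpa [Matrix.mulVec, dotProduct, hN₀] using this
  have hzz : ∀ j, z (i₀.succAbove j) = 0 := by
    intro j
    have := Matrix.eq_zero_of_mulVec_eq_zero hdet hmv
    exact congrFun this j
  have hz : ∀ k, z k = 0 := by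
    intro k
    rcases eq_or_ne k i₀ with rfl | hk
    · exact hz0
    · obtain ⟨j, rfl⟩ := Fin.exists_succAbove_eq (Ne.symm hk).symm
      exact hzz j
  have := hz i
  simp only [hzdef, sub_eq_zero] at this
  calc u i * w i₀ = w i₀ * u i := by ring
    _ = u i₀ * w i := this
    _ = u i₀ * w i := rfl

def Fdet {d : ℕ} (P : Fin d → Fin d → ℝ) (x : Fin d → ℝ) : ℝ :=
  (Matrix.of fun j r => P j r - x r).det

lemma Fdet_affine {d : ℕ} (hd : 0 < d) (P : Fin d → Fin d → ℝ) {n : ℕ}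
    (w : Fin n → ℝ) (hw : ∑ i, w i = 1) (v : Fin n → Fin d → ℝ) :
    Fdet P (∑ i, w i • v i) = ∑ i, w i * Fdet P (v i) := by
  classical
  set i0 : Fin d := ⟨0, hd⟩ with hi0
  set K : Matrix (Fin d) (Fin d) ℝ := Matrix.of fun j r => P j r - P i0 r with hK
  set L : (Fin d → ℝ) →ₗ[ℝ] ℝ :=
    { toFun := fun y => (K.updateRow i0 y).det
      map_add' := fun y y' => Matrix.det_updateRow_add K i0 y y'
      map_smul' := fun s y => Matrix.det_updateRow_smul K i0 s y } with hL
  have key : ∀ x : Fin d → ℝ, Fdet P x = L (P i0) - L x := by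
    intro x
    have h1 : Fdet P x = (K.updateRow i0 (fun r => P i0 r - x r)).det := by
      refine Matrix.det_eq_of_forall_row_eq_smul_add_const
        (fun j => if j = i0 then 0 else 1) i0 (if_pos rfl) ?_
      intro a c
      rcases eq_or_ne a i0 with rfl | ha
      · simp [Matrix.updateRow_self]
        try ring
      · simp [Matrix.updateRow_ne ha, Matrix.updateRow_self, ha, hK]
        try ring
    have h2 : (fun r => P i0 r - x r) = P i0 - x := rfl
    rw [h1, h2]
    show L (P i0 - x) = L (P i0) - L x
    rw [map_sub]
  rw [key, map_sum]
  have : ∀ i, w i * Fdet P (v i) = w i * L (P i0) - w i * L (v i) := by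
    intro i; rw [key]; ring
  rw [Finset.sum_congr rfl fun i _ => this i, Finset.sum_sub_distrib, ← Finset.sum_mul, hw]
  have : ∀ i, L (w i • v i) = w i * L (v i) := fun i => by rw [_root_.map_smul, smul_eq_mul]
  rw [Finset.sum_congr rfl fun i _ => this i]
  ring

lemma det_ne_zero_of_linearIndependent_rows {d : ℕ} {M : Matrix (Fin d) (Fin d) ℝ}
    (h : LinearIndependent ℝ (fun i => M i)) : M.det ≠ 0 := by
  classical
  intro h0
  obtain ⟨v, hv0, hv⟩ := Matrix.exists_vecMul_eq_zero_iff.mpr h0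
  apply hv0
  have hsum : ∑ i, v i • M i = 0 := by
    funext c
    have := congrFun hv c
    simpa [Matrix.vecMul, dotProduct] using this
  have := Fintype.linearIndependent_iff.mp h v hsum
  funext i; exact this i

theorem stmt6 (d : ℕ) (hd : 1 ≤ d) (b : Fin (d + 2) → Fin d → ℝ)
    (eτ eτ' : Fin (d + 1) → Fin (d + 2))
    (heτ : ∀ i, eτ i = i.castSucc)
    (heτ' : ∀ i : Fin (d + 1),
      eτ' i = if h : (i : ℕ) < d then (⟨(i : ℕ), by omega⟩ : Fin (d + 2)) else Fin.last (d + 1))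
    (hτ : AffineIndependent ℝ (b ∘ eτ)) (hτ' : AffineIndependent ℝ (b ∘ eτ'))
    (hfacet : convexHull ℝ (Set.range (b ∘ eτ)) ∩ convexHull ℝ (Set.range (b ∘ eτ'))
      = convexHull ℝ (Set.range fun i : Fin d => b i.castSucc.castSucc))
    (p p' : Fin d → ℝ)
    (hp : p ∈ interior (convexHull ℝ (Set.range (b ∘ eτ))))
    (hp' : p' ∈ interior (convexHull ℝ (Set.range (b ∘ eτ'))))
    (Dτ Dτ' : Matrix (Fin d) (Fin (d + 1)) ℝ)
    (hDτ : ∀ r i, Dτ r i = b (eτ i) r - p r)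
    (hDτ' : ∀ r i, Dτ' r i = b (eτ' i) r - p' r)
    (C : Matrix (Fin d) (Fin (d + 2)) ℝ)
    (hCτ : IsOriented (C.submatrix id eτ)) (hCτ' : IsOriented (C.submatrix id eτ'))
    (hsame : ∀ i, 0 < colMinor (C.submatrix id eτ) i * colMinor Dτ i) :
    ∀ i, colMinor (C.submatrix id eτ') i * colMinor Dτ' i < 0 := by
  classical
  have hd0 : 0 < d := hd
  -- index facts
  have heτc : ∀ j : Fin d, eτ j.castSucc = j.castSucc.castSucc := fun j => by
    rw [heτ]
  have heτ'c : ∀ j : Fin d, eτ' j.castSucc = j.castSucc.castSucc := fun j => by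
    rw [heτ']
    rw [dif_pos (show ((j.castSucc : Fin (d + 1)) : ℕ) < d by simp)]
    ext
    simp
  have heτl : eτ (Fin.last d) = (Fin.last d).castSucc := heτ _
  have heτ'l : eτ' (Fin.last d) = Fin.last (d + 1) := by
    rw [heτ']
    simp
  -- affine bases
  have hcard : Fintype.card (Fin (d + 1)) = Module.finrank ℝ (Fin d → ℝ) + 1 := by
    simp [Module.finrank_fin_fun]
  have htopτ : affineSpan ℝ (Set.range (b ∘ eτ)) = ⊤ :=
    hτ.affineSpan_eq_top_iff_card_eq_finrank_add_one.mpr hcard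
  have htopτ' : affineSpan ℝ (Set.range (b ∘ eτ')) = ⊤ :=
    hτ'.affineSpan_eq_top_iff_card_eq_finrank_add_one.mpr hcard
  set Bτ : AffineBasis (Fin (d + 1)) ℝ (Fin d → ℝ) := ⟨b ∘ eτ, hτ, htopτ⟩ with hBτ
  set Bτ' : AffineBasis (Fin (d + 1)) ℝ (Fin d → ℝ) := ⟨b ∘ eτ', hτ', htopτ'⟩ with hBτ'
  have hBτc : ⇑Bτ = b ∘ eτ := rfl
  have hBτ'c : ⇑Bτ' = b ∘ eτ' := rfl
  have hrangeτ : Set.range ⇑Bτ = Set.range (b ∘ eτ) := by rw [hBτc]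
  have hrangeτ' : Set.range ⇑Bτ' = Set.range (b ∘ eτ') := by rw [hBτ'c]
  -- points
  set A : Fin d → Fin d → ℝ := fun j => b j.castSucc.castSucc with hA
  set a1 : Fin d → ℝ := b (Fin.last d).castSucc with ha1
  set a2 : Fin d → ℝ := b (Fin.last (d + 1)) with ha2
  -- interior coordinates are positive
  have hwp : ∀ i, 0 < Bτ.coord i p := by
    have h1 : p ∈ {x | ∀ i, 0 < Bτ.coord i x} := by
      rw [← Bτ.interior_convexHull, hrangeτ]
      exact hp
    exact h1
  have hwp' : ∀ i, 0 < Bτ'.coord i p' := by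
    have h1 : p' ∈ {x | ∀ i, 0 < Bτ'.coord i x} := by
      rw [← Bτ'.interior_convexHull, hrangeτ']
      exact hp'
    exact h1
  -- kernel relation for Dτ'
  have hker' : ∀ r, ∑ i, Bτ'.coord i p' * Dτ' r i = 0 := by
    intro r
    have h1 : ∑ i, Bτ'.coord i p' • (b ∘ eτ') i = p' := by
      have := Bτ'.linear_combination_coord_eq_self p'
      rwa [hBτ'c] at this
    have h2 := congrFun h1 r
    rw [Finset.sum_apply] at h2
    simp only [Pi.smul_apply, smul_eq_mul, Function.comp_apply] at h2
    have h3 : ∑ i, Bτ'.coord i p' = 1 := Bτ'.sum_coord_apply_eq_one p'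
    calc ∑ i, Bτ'.coord i p' * Dτ' r i
        = ∑ i, (Bτ'.coord i p' * b (eτ' i) r - Bτ'.coord i p' * p' r) := by
          refine Finset.sum_congr rfl fun i _ => ?_
          rw [hDτ']
          ring
      _ = (∑ i, Bτ'.coord i p' * b (eτ' i) r) - (∑ i, Bτ'.coord i p') * p' r := by
          rw [Finset.sum_sub_distrib, Finset.sum_mul]
      _ = 0 := by rw [h2, h3]; ring
  -- F vanishes on facet vertices
  have hFA : ∀ j : Fin d, Fdet A (A j) = 0 := by
    intro j
    apply Matrix.det_eq_zero_of_row_eq_zero j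
    intro r
    simp
  -- evaluation of F via coordinates
  have hFeval : ∀ q : Fin d → ℝ, Fdet A q = Bτ.coord (Fin.last d) q * Fdet A a1 := by
    intro q
    have hq : q = ∑ i, Bτ.coord i q • (b ∘ eτ) i := by
      have := Bτ.linear_combination_coord_eq_self q
      rw [hBτc] at this
      exact this.symm
    have hsum1 : ∑ i, Bτ.coord i q = 1 := Bτ.sum_coord_apply_eq_one q
    calc Fdet A q = Fdet A (∑ i, Bτ.coord i q • (b ∘ eτ) i) := by rw [← hq]
      _ = ∑ i, Bτ.coord i q * Fdet A ((b ∘ eτ) i) := Fdet_affine hd0 A _ hsum1 _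
      _ = Bτ.coord (Fin.last d) q * Fdet A a1 := by
          rw [Fin.sum_univ_castSucc]
          have hz : ∀ j : Fin d, Bτ.coord j.castSucc q * Fdet A ((b ∘ eτ) j.castSucc) = 0 := by
            intro j
            have : (b ∘ eτ) j.castSucc = A j := by
              simp only [Function.comp_apply, heτc j, hA]
            rw [this, hFA j, mul_zero]
          rw [Finset.sum_congr rfl fun j _ => hz j]
          simp only [Function.comp_apply, heτl, ha1]
          simp
  have hFeval' : ∀ q : Fin d → ℝ, Fdet A q = Bτ'.coord (Fin.last d) q * Fdet A a2 := by
    intro q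
    have hq : q = ∑ i, Bτ'.coord i q • (b ∘ eτ') i := by
      have := Bτ'.linear_combination_coord_eq_self q
      rw [hBτ'c] at this
      exact this.symm
    have hsum1 : ∑ i, Bτ'.coord i q = 1 := Bτ'.sum_coord_apply_eq_one q
    calc Fdet A q = Fdet A (∑ i, Bτ'.coord i q • (b ∘ eτ') i) := by rw [← hq]
      _ = ∑ i, Bτ'.coord i q * Fdet A ((b ∘ eτ') i) := Fdet_affine hd0 A _ hsum1 _
      _ = Bτ'.coord (Fin.last d) q * Fdet A a2 := by
          rw [Fin.sum_univ_castSucc]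
          have hz : ∀ j : Fin d, Bτ'.coord j.castSucc q * Fdet A ((b ∘ eτ') j.castSucc) = 0 := by
            intro j
            have : (b ∘ eτ') j.castSucc = A j := by
              simp only [Function.comp_apply, heτ'c j, hA]
            rw [this, hFA j, mul_zero]
          rw [Finset.sum_congr rfl fun j _ => hz j]
          simp only [Function.comp_apply, heτ'l, ha2]
          simp
  -- nonvanishing
  have hFa1 : Fdet A a1 ≠ 0 := by
    apply det_ne_zero_of_linearIndependent_rows
    have hli := (affineIndependent_iff_linearIndependent_vsub ℝ (b ∘ eτ) (Fin.last d)).mp hτ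
    have hinj : Function.Injective (fun j : Fin d =>
        (⟨j.castSucc, (Fin.castSucc_lt_last j).ne⟩ : {x : Fin (d + 1) // x ≠ Fin.last d})) := by
      intro x y hxy
      have := congrArg (fun t : {x : Fin (d + 1) // x ≠ Fin.last d} => (t : Fin (d + 1))) hxy
      simpa [Fin.castSucc_inj] using this
    have h2 := hli.comp _ hinj
    have h3 : (fun j : Fin d => (Matrix.of fun j r => A j r - a1 r) j) =
        (fun (i : {x : Fin (d + 1) // x ≠ Fin.last d}) =>
          (b ∘ eτ) (i : Fin (d + 1)) -ᵥ (b ∘ eτ) (Fin.last d)) ∘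
        (fun j : Fin d =>
          (⟨j.castSucc, (Fin.castSucc_lt_last j).ne⟩ : {x : Fin (d + 1) // x ≠ Fin.last d})) := by
      funext j
      show (fun r => A j r - a1 r) = _
      funext r
      simp only [Function.comp_apply, vsub_eq_sub, Pi.sub_apply, heτc j, heτl, hA, ha1]
    rw [h3]
    exact h2
  have hFa2 : Fdet A a2 ≠ 0 := by
    apply det_ne_zero_of_linearIndependent_rows
    have hli := (affineIndependent_iff_linearIndependent_vsub ℝ (b ∘ eτ') (Fin.last d)).mp hτ'
    have hinj : Function.Injective (fun j : Fin d =>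
        (⟨j.castSucc, (Fin.castSucc_lt_last j).ne⟩ : {x : Fin (d + 1) // x ≠ Fin.last d})) := by
      intro x y hxy
      have := congrArg (fun t : {x : Fin (d + 1) // x ≠ Fin.last d} => (t : Fin (d + 1))) hxy
      simpa [Fin.castSucc_inj] using this
    have h2 := hli.comp _ hinj
    have h3 : (fun j : Fin d => (Matrix.of fun j r => A j r - a2 r) j) =
        (fun (i : {x : Fin (d + 1) // x ≠ Fin.last d}) =>
          (b ∘ eτ') (i : Fin (d + 1)) -ᵥ (b ∘ eτ') (Fin.last d)) ∘
        (fun j : Fin d =>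
          (⟨j.castSucc, (Fin.castSucc_lt_last j).ne⟩ : {x : Fin (d + 1) // x ≠ Fin.last d})) := by
      funext j
      show (fun r => A j r - a2 r) = _
      funext r
      simp only [Function.comp_apply, vsub_eq_sub, Pi.sub_apply, heτ'c j, heτ'l, hA, ha2]
    rw [h3]
    exact h2
  -- the two opposite vertices lie strictly on opposite sides of the facet hyperplane
  have hopp : Fdet A a1 * Fdet A a2 < 0 := by
    rcases lt_or_gt_of_ne (mul_ne_zero hFa1 hFa2) with h | h
    · exact h
    exfalso
    set m : Fin (d + 1) → ℝ := fun i => Bτ'.coord i a1 with hm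
    have hEq : Fdet A a1 = m (Fin.last d) * Fdet A a2 := hFeval' a1
    set t : ℝ := m (Fin.last d) with htdef
    have h5 : t * (Fdet A a2 * Fdet A a2) = Fdet A a1 * Fdet A a2 := by rw [hEq]; ring
    have htpos : 0 < t := by nlinarith [h5, mul_self_nonneg (Fdet A a2)]
    -- bound for the coordinates of a1 in the τ' basis
    set S : ℝ := ∑ i, max 0 (-(m i)) with hS
    have hS0 : 0 ≤ S := Finset.sum_nonneg fun i _ => le_max_left _ _
    have hmge : ∀ i, -S ≤ m i := by
      intro i
      have h1 : max 0 (-(m i)) ≤ S :=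
        Finset.single_le_sum (fun k (_ : k ∈ Finset.univ) => le_max_left 0 (-(m k)))
          (Finset.mem_univ i)
      have h2 : -(m i) ≤ max 0 (-(m i)) := le_max_right _ _
      linarith
    set s : ℝ := 1 / (1 + d * S) with hs
    have hden : (0:ℝ) < 1 + d * S := by positivity
    have hs0 : 0 < s := by positivity
    have hs1 : s ≤ 1 := by
      rw [hs, div_le_one hden]
      nlinarith [hS0, Nat.cast_nonneg (α := ℝ) d]
    have hskey : s * (1 + d * S) = 1 := by
      rw [hs]
      field_simp
    -- centroid weights
    set wc : Fin (d + 1) → ℝ := fun i => if i = Fin.last d then 0 else (d : ℝ)⁻¹ with hwc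
    have hdne : (d : ℝ) ≠ 0 := Nat.cast_ne_zero.mpr (by omega)
    have hwcsum : ∑ i, wc i = 1 := by
      rw [Fin.sum_univ_castSucc]
      have h1 : ∀ j : Fin d, wc j.castSucc = (d : ℝ)⁻¹ := by
        intro j
        simp [hwc, (Fin.castSucc_lt_last j).ne]
      rw [Finset.sum_congr rfl fun j _ => h1 j]
      simp [hwc, Finset.sum_const, hdne]
    have hwcnn : ∀ i, 0 ≤ wc i := by
      intro i
      rw [hwc]
      dsimp only
      split
      · exact le_refl 0
      · positivity
    set c : Fin d → ℝ := ∑ i, wc i • (b ∘ eτ) i with hc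
    have hc' : ∑ i, wc i • (b ∘ eτ') i = c := by
      rw [hc, Fin.sum_univ_castSucc, Fin.sum_univ_castSucc]
      congr 1
      · refine Finset.sum_congr rfl fun j _ => ?_
        simp only [Function.comp_apply, heτc j, heτ'c j]
      · simp [hwc]
    have hcoordc : ∀ k, Bτ.coord k c = wc k := by
      intro k
      have h1 : (Finset.univ.affineCombination ℝ ⇑Bτ wc) = c := by
        rw [Finset.univ.affineCombination_eq_linear_combination _ _ hwcsum, hBτc, hc]
      rw [← h1]
      exact Bτ.coord_apply_combination_of_mem (Finset.mem_univ k) hwcsum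
    have hcoordc' : ∀ k, Bτ'.coord k c = wc k := by
      intro k
      have h1 : (Finset.univ.affineCombination ℝ ⇑Bτ' wc) = c := by
        rw [Finset.univ.affineCombination_eq_linear_combination _ _ hwcsum, hBτ'c, hc']
      rw [← h1]
      exact Bτ'.coord_apply_combination_of_mem (Finset.mem_univ k) hwcsum
    -- the witness point
    set x : Fin d → ℝ := AffineMap.lineMap c a1 s with hx
    have hxcoord : ∀ k : Fin (d + 1),
        Bτ.coord k x = (1 - s) * wc k + s * Bτ.coord k a1 := by
      intro k
      rw [hx, AffineMap.apply_lineMap, AffineMap.lineMap_apply_module, smul_eq_mul, smul_eq_mul,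
        hcoordc k]
    have hxcoord' : ∀ k : Fin (d + 1),
        Bτ'.coord k x = (1 - s) * wc k + s * m k := by
      intro k
      rw [hx, AffineMap.apply_lineMap, AffineMap.lineMap_apply_module, smul_eq_mul, smul_eq_mul,
        hcoordc' k, hm]
    have ha1B : a1 = Bτ (Fin.last d) := by
      rw [hBτc]
      simp only [Function.comp_apply, heτl, ha1]
    -- x is in both simplices
    have hx1 : x ∈ convexHull ℝ (Set.range (b ∘ eτ)) := by
      rw [← hrangeτ, Bτ.convexHull_eq_nonneg_coord]
      intro k
      rw [hxcoord k, ha1B]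
      rcases eq_or_ne k (Fin.last d) with rfl | hk
      · rw [Bτ.coord_apply_eq]
        have h0 : wc (Fin.last d) = 0 := by simp [hwc]
        rw [h0]
        have : (1 - s) * (0:ℝ) + s * 1 = s := by ring
        rw [this]
        linarith
      · rw [Bτ.coord_apply_ne hk]
        have h9 : 0 ≤ (1 - s) * wc k := mul_nonneg (by linarith) (hwcnn k)
        linarith
    have hx2 : x ∈ convexHull ℝ (Set.range (b ∘ eτ')) := by
      rw [← hrangeτ', Bτ'.convexHull_eq_nonneg_coord]
      intro k
      rw [hxcoord' k]
      rcases eq_or_ne k (Fin.last d) with rfl | hk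
      · have h0 : wc (Fin.last d) = 0 := by simp [hwc]
        rw [h0]
        have h9 : 0 ≤ s * m (Fin.last d) := mul_nonneg (le_of_lt hs0) (by rw [← htdef]; linarith)
        linarith
      · have hwck : wc k = (d : ℝ)⁻¹ := by simp [hwc, hk]
        rw [hwck]
        have h1 : -S ≤ m k := hmge k
        have h3 : (1 - s) * (d : ℝ)⁻¹ + s * m k ≥ (1 - s) * (d : ℝ)⁻¹ - s * S := by nlinarith [mul_le_mul_of_nonneg_left h1 (le_of_lt hs0)]
        have h1ms : 1 - s = s * ((d : ℝ) * S) := by linear_combination -1 * hskey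
        have h4 : (1 - s) * (d : ℝ)⁻¹ - s * S ≥ 0 := by
          rw [h1ms]
          have h6 : s * ((d : ℝ) * S) * (d : ℝ)⁻¹ = s * S * ((d : ℝ) * (d : ℝ)⁻¹) := by ring
          rw [h6, mul_inv_cancel₀ hdne]
          simp
        linarith
    -- hence x lies in the common facet
    have hxf : x ∈ convexHull ℝ (Set.range fun i : Fin d => b i.castSucc.castSucc) := by
      rw [← hfacet]
      exact ⟨hx1, hx2⟩
    -- the last τ-coordinate vanishes on the facet
    have hlast0 : Bτ.coord (Fin.last d) x = 0 := by
      have himg : ⇑(Bτ.coord (Fin.last d)) '' (convexHull ℝ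
          (Set.range fun i : Fin d => b i.castSucc.castSucc)) ⊆ {0} := by
        rw [AffineMap.image_convexHull]
        have h1 : (⇑(Bτ.coord (Fin.last d)) ''
            (Set.range fun i : Fin d => b i.castSucc.castSucc)) = {0} := by
          rw [← Set.range_comp]
          have h2 : (⇑(Bτ.coord (Fin.last d)) ∘ fun i : Fin d => b i.castSucc.castSucc) =
              fun _ : Fin d => (0 : ℝ) := by
            funext j
            have h3 : b j.castSucc.castSucc = Bτ j.castSucc := by
              rw [hBτc]
              simp only [Function.comp_apply, heτc j]
            simp only [Function.comp_apply, h3]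
            exact Bτ.coord_apply_ne (Fin.castSucc_lt_last j).ne'
          rw [h2]
          haveI : Nonempty (Fin d) := ⟨⟨0, hd0⟩⟩
          simp [Set.range_const]
        rw [h1, convexHull_singleton]
      have := himg ⟨x, hxf, rfl⟩
      simpa using this
    -- but it equals s > 0
    have hlastpos : Bτ.coord (Fin.last d) x = s := by
      rw [hxcoord (Fin.last d), ha1B, Bτ.coord_apply_eq, hwc]
      simp
    rw [hlastpos] at hlast0
    exact absurd hlast0 (ne_of_gt hs0)
  -- minors at the last position
  have hDlast : colMinor Dτ (Fin.last d) = Fdet A p := by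
    rw [colMinor, show Fdet A p = ((Matrix.of fun j r => A j r - p r)ᵀ).det from
      (Matrix.det_transpose _).symm]
    congr 1
    ext r j
    simp only [Matrix.submatrix_apply, id_eq, Matrix.transpose_apply, Matrix.of_apply,
      Fin.succAbove_last, hDτ, heτc j, hA]
  have hD'last : colMinor Dτ' (Fin.last d) = Fdet A p' := by
    rw [colMinor, show Fdet A p' = ((Matrix.of fun j r => A j r - p' r)ᵀ).det from
      (Matrix.det_transpose _).symm]
    congr 1
    ext r j
    simp only [Matrix.submatrix_apply, id_eq, Matrix.transpose_apply, Matrix.of_apply,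
      Fin.succAbove_last, hDτ', heτ'c j, hA]
  have hcol : eτ' ∘ (Fin.last d).succAbove = eτ ∘ (Fin.last d).succAbove := by
    funext j
    simp only [Function.comp_apply, Fin.succAbove_last, heτ'c j, heτc j]
  have eq5 : colMinor (C.submatrix id eτ') (Fin.last d) =
      colMinor (C.submatrix id eτ) (Fin.last d) := by
    rw [colMinor, colMinor, Matrix.submatrix_submatrix, Matrix.submatrix_submatrix, hcol]
  have hFp : Fdet A p = Bτ.coord (Fin.last d) p * Fdet A a1 := hFeval p
  have hFp' : Fdet A p' = Bτ'.coord (Fin.last d) p' * Fdet A a2 := hFeval' p'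
  have hFpne : Fdet A p ≠ 0 := by
    rw [hFp]; exact mul_ne_zero (ne_of_gt (hwp _)) hFa1
  have hFp'ne : Fdet A p' ≠ 0 := by
    rw [hFp']; exact mul_ne_zero (ne_of_gt (hwp' _)) hFa2
  have hpp' : Fdet A p * Fdet A p' < 0 := by
    rw [hFp, hFp']
    nlinarith [mul_pos (hwp (Fin.last d)) (hwp' (Fin.last d)), hopp]
  have hkey : colMinor (C.submatrix id eτ') (Fin.last d) * colMinor Dτ' (Fin.last d) < 0 := by
    rw [eq5, hD'last]
    have h1 := hsame (Fin.last d)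
    rw [hDlast] at h1
    have h2 : 0 < Fdet A p * Fdet A p := mul_self_pos.mpr hFpne
    nlinarith [h1, hpp', h2]
  have h₀' : colMinor Dτ' (Fin.last d) ≠ 0 := by
    rw [hD'last]; exact hFp'ne
  have hprop : ∀ i : Fin (d + 1),
      (-1 : ℝ) ^ (i : ℕ) * colMinor Dτ' i * Bτ'.coord (Fin.last d) p' =
      (-1 : ℝ) ^ ((Fin.last d : Fin (d + 1)) : ℕ) * colMinor Dτ' (Fin.last d) *
        Bτ'.coord i p' := by
    intro i
    exact minor_mul_eq Dτ' (fun k => Bτ'.coord k p') hwp' hker' (Fin.last d) h₀' i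
  have hsplit : ∀ k : Fin (d + 1),
      ((-1 : ℝ) ^ (k : ℕ) * colMinor (C.submatrix id eτ') k) *
        ((-1 : ℝ) ^ (k : ℕ) * colMinor Dτ' k) =
      colMinor (C.submatrix id eτ') k * colMinor Dτ' k := by
    intro k
    have hp2 : ((-1 : ℝ) ^ (k : ℕ)) * ((-1 : ℝ) ^ (k : ℕ)) = 1 := by
      rw [← pow_add, ← two_mul, pow_mul]
      norm_num
    rw [mul_mul_mul_comm, hp2, one_mul]
  intro i
  rcases hCτ' with hposC | hnegC
  · have hul : (-1 : ℝ) ^ ((Fin.last d : Fin (d + 1)) : ℕ) * colMinor Dτ' (Fin.last d) < 0 := by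
      nlinarith [hsplit (Fin.last d), hposC (Fin.last d), hkey]
    have hui : (-1 : ℝ) ^ (i : ℕ) * colMinor Dτ' i < 0 := by
      nlinarith [hprop i, hul, hwp' (Fin.last d), hwp' i]
    have hfin := mul_neg_of_pos_of_neg (hposC i) hui
    rw [hsplit i] at hfin
    exact hfin
  · have hul : 0 < (-1 : ℝ) ^ ((Fin.last d : Fin (d + 1)) : ℕ) * colMinor Dτ' (Fin.last d) := by
      nlinarith [hsplit (Fin.last d), hnegC (Fin.last d), hkey]
    have hui : 0 < (-1 : ℝ) ^ (i : ℕ) * colMinor Dτ' i := by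
      nlinarith [hprop i, hul, hwp' (Fin.last d), hwp' i]
    have hfin := mul_neg_of_neg_of_pos (hnegC i) hui
    rw [hsplit i] at hfin
    exact hfin
end
end

section
/- Let Γ be a pure d-dimensional geometric simplicial complex in ℝ^d whose vertices lie in a point configuration A = {a_1,…,a_n} ⊂ ℝ^d, and suppose a real d×n matrix C positively decorates every d-simplex of Γ. Then the dual graph of Γ is bipartite. Explicitly, for a d-simplex τ of Γ with vertices a_{i_1},…,a_{i_{d+1}}, let Ã_τ (resp. C̃_τ) be the (d+1)×(d+1) matrix whose j-th column is (1, a_{i_j}) (resp. (1, c_{i_j}) where c_i is the i-th column of C); then the map τ ↦ sign(det(Ã_τ)·det(C̃_τ)) assigns opposite signs to any two d-simplices of Γ sharing a common facet. -/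
open Matrix

noncomputable section

attribute [local instance] Classical.propDecidable

/-- `C` positively decorates the `d`-simplex with vertex indices `τ` if the
`d × (d+1)` submatrix of `C` given by the columns in `τ` (in increasing order)
is oriented. -/
def Decorates {d n : ℕ} (C : Matrix (Fin d) (Fin n) ℝ) (τ : Finset (Fin n)) : Prop :=
  ∃ h : τ.card = d + 1,
    IsOriented (C.submatrix id fun j => ((τ.orderIsoOfFin h) j).val)

namespace Stmt7Aux








/-- The vector `(1, y)` in `ℝ^{d+1}`. -/
def lift1 {d : ℕ} (y : Fin d → ℝ) : Fin (d + 1) → ℝ := Fin.cons 1 y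

/-- The square matrix with the given columns. -/
def cmat {d : ℕ} (cols : Fin (d + 1) → Fin (d + 1) → ℝ) :
    Matrix (Fin (d + 1)) (Fin (d + 1)) ℝ :=
  Matrix.of fun r j => cols j r

lemma det_cmat_insert {d : ℕ} (cols : Fin (d + 1) → Fin (d + 1) → ℝ) (p : Fin (d + 1)) :
    (cmat cols).det =
      (-1 : ℝ) ^ (p : ℕ) * (cmat (Fin.cons (cols p) (cols ∘ p.succAbove))).det := by
  have hsub : cmat (Fin.cons (cols p) (cols ∘ p.succAbove)) =
      (cmat cols).submatrix id ⇑(p.cycleRange)⁻¹ := by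
    ext r j
    refine Fin.cases ?_ (fun i => ?_) j
    · simp [cmat, Equiv.Perm.inv_def, Fin.cycleRange_symm_zero]
    · simp [cmat, Equiv.Perm.inv_def, Fin.cycleRange_symm_succ]
  have hdet : (cmat (Fin.cons (cols p) (cols ∘ p.succAbove))).det =
      ((Equiv.Perm.sign (p.cycleRange)⁻¹ : ℤ) : ℝ) * (cmat cols).det := by
    rw [hsub, Matrix.det_permute']
  rw [hdet, Equiv.Perm.sign_inv, Fin.sign_cycleRange]
  push_cast
  rcases neg_one_pow_eq_or ℝ (p : ℕ) with h | h <;> rw [h] <;> ring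

lemma det_cmat_ne_zero {d : ℕ} (pts : Fin (d + 1) → Fin d → ℝ)
    (h : AffineIndependent ℝ pts) :
    (cmat fun j => lift1 (pts j)).det ≠ 0 := by
  intro hdet
  obtain ⟨w, hw0, hw⟩ := (Matrix.exists_mulVec_eq_zero_iff).2 hdet
  have hrow : ∀ r, ∑ j, lift1 (pts j) r * w j = 0 := by
    intro r
    have := congrFun hw r
    simpa [Matrix.mulVec, dotProduct, cmat] using this
  have hsum : ∑ j, w j = 0 := by
    have := hrow 0
    simpa [lift1] using this
  have hvsub : Finset.univ.weightedVSub pts w = (0 : Fin d → ℝ) := by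
    rw [Finset.weightedVSub_eq_linear_combination _ hsum]
    funext r
    have := hrow r.succ
    simpa [lift1, mul_comm] using this
  have := (affineIndependent_iff_of_fintype ℝ pts).1 h w hsum hvsub
  exact hw0 (funext fun j => this j)

lemma det_cmat_cons_sum {d : ℕ} (tail : Fin d → Fin (d + 1) → ℝ)
    (c : Fin (d + 1) → ℝ) (g : Fin (d + 1) → Fin (d + 1) → ℝ) :
    (cmat (Fin.cons (∑ j, c j • g j) tail)).det =
      ∑ j, c j * (cmat (Fin.cons (g j) tail)).det := by
  have hupd : ∀ x : Fin (d + 1) → ℝ,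
      cmat (Fin.cons x tail) = (cmat (Fin.cons 0 tail)).updateCol 0 x := by
    intro x
    ext r j
    refine Fin.cases ?_ (fun i => ?_) j <;>
      simp [cmat, Matrix.updateCol_apply, Fin.succ_ne_zero]
  let L : (Fin (d + 1) → ℝ) →ₗ[ℝ] ℝ :=
    { toFun := fun x => ((cmat (Fin.cons 0 tail)).updateCol 0 x).det
      map_add' := fun x y => Matrix.det_updateCol_add _ _ _ _
      map_smul' := fun s x => Matrix.det_updateCol_smul _ _ _ _ }
  have : ∀ x, (cmat (Fin.cons x tail)).det = L x := fun x => by rw [hupd x]; rfl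
  rw [this, map_sum]
  refine Finset.sum_congr rfl fun j _ => ?_
  rw [LinearMap.map_smul, smul_eq_mul, ← this]

lemma enum_erase {n d : ℕ} {τ σ : Finset (Fin n)} (hτ : τ.card = d + 1)
    (hσ : σ.card = d) {v : Fin n} (hv : v ∈ τ) (hσe : τ.erase v = σ) :
    ∃ p : Fin (d + 1), ((τ.orderIsoOfFin hτ) p).val = v ∧
      ∀ i : Fin d, ((τ.orderIsoOfFin hτ) (p.succAbove i)).val =
        ((σ.orderIsoOfFin hσ) i).val := by
  set p : Fin (d + 1) := (τ.orderIsoOfFin hτ).symm ⟨v, hv⟩ with hp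
  have hp0 : ((τ.orderIsoOfFin hτ) p).val = v := by
    rw [hp, OrderIso.apply_symm_apply]
  refine ⟨p, hp0, ?_⟩
  set f : Fin d → Fin n := fun i => ((τ.orderIsoOfFin hτ) (p.succAbove i)).val with hf
  have hmono : StrictMono f := by
    intro i j hij
    have h1 : p.succAbove i < p.succAbove j := Fin.strictMono_succAbove p hij
    have := (τ.orderEmbOfFin hτ).strictMono h1
    simpa [hf, Finset.coe_orderIsoOfFin_apply] using this
  have hfs : ∀ i, f i ∈ σ := by
    intro i
    rw [← hσe, Finset.mem_erase]
    constructor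
    · intro hcon
      have : (τ.orderIsoOfFin hτ) (p.succAbove i) = ⟨v, hv⟩ := Subtype.ext hcon
      have h2 : p.succAbove i = p := by
        apply (τ.orderIsoOfFin hτ).injective
        rw [this, hp, OrderIso.apply_symm_apply]
      exact Fin.succAbove_ne p i h2
    · exact ((τ.orderIsoOfFin hτ) (p.succAbove i)).2
  have huniq := Finset.orderEmbOfFin_unique hσ hfs hmono
  intro i
  have := congrFun huniq i
  rw [hf] at this
  simp only [Finset.coe_orderIsoOfFin_apply]
  exact this











lemma det_rearrange {n d : ℕ} (u : Fin n → Fin (d + 1) → ℝ) {τ σ : Finset (Fin n)}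
    (hτ : τ.card = d + 1) (hσ : σ.card = d) {v : Fin n} (p : Fin (d + 1))
    (hp0 : ((τ.orderIsoOfFin hτ) p).val = v)
    (hpi : ∀ i, ((τ.orderIsoOfFin hτ) (p.succAbove i)).val = ((σ.orderIsoOfFin hσ) i).val) :
    (cmat fun j => u ((τ.orderIsoOfFin hτ) j).val).det =
      (-1 : ℝ) ^ (p : ℕ) *
        (cmat (Fin.cons (u v) (fun i => u ((σ.orderIsoOfFin hσ) i).val) :
          Fin (d + 1) → Fin (d + 1) → ℝ)).det := by
  rw [det_cmat_insert _ p]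
  have h1 : (Fin.cons ((fun j => u ((τ.orderIsoOfFin hτ) j).val) p)
      ((fun j => u ((τ.orderIsoOfFin hτ) j).val) ∘ p.succAbove) :
        Fin (d + 1) → Fin (d + 1) → ℝ) =
      Fin.cons (u v) (fun i => u ((σ.orderIsoOfFin hσ) i).val) := by
    funext j
    refine Fin.cases ?_ (fun i => ?_) j
    · simp [hp0]
    · simp only [Fin.cons_succ, Function.comp_apply, ← Finset.coe_orderIsoOfFin_apply]
      rw [hpi i]
  rw [h1]

lemma det_cmat_expand {n d : ℕ} (C : Matrix (Fin d) (Fin n) ℝ) {τ : Finset (Fin n)}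
    (hτ : τ.card = d + 1) :
    (cmat fun j => lift1 fun r => C r ((τ.orderIsoOfFin hτ) j).val).det =
      ∑ j : Fin (d + 1), (-1 : ℝ) ^ (j : ℕ) *
        colMinor (C.submatrix id fun j => ((τ.orderIsoOfFin hτ) j).val) j := by
  rw [Matrix.det_succ_row_zero]
  refine Finset.sum_congr rfl fun j _ => ?_
  have h0 : (cmat fun j => lift1 fun r => C r ((τ.orderIsoOfFin hτ) j).val) 0 j = 1 := by
    simp [cmat, lift1]
  rw [h0, mul_one]
  congr 1

lemma oriented_pos {n d : ℕ} (C : Matrix (Fin d) (Fin n) ℝ) {τ σ : Finset (Fin n)}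
    (hτ : τ.card = d + 1) (hσ : σ.card = d) (p : Fin (d + 1))
    (hpi : ∀ i, ((τ.orderIsoOfFin hτ) (p.succAbove i)).val = ((σ.orderIsoOfFin hσ) i).val)
    (hor : IsOriented (C.submatrix id fun j => ((τ.orderIsoOfFin hτ) j).val)) :
    0 < (cmat fun j => lift1 fun r => C r ((τ.orderIsoOfFin hτ) j).val).det *
      ((-1 : ℝ) ^ (p : ℕ) * (C.submatrix id fun i => ((σ.orderIsoOfFin hσ) i).val).det) := by
  set M := C.submatrix id fun j => ((τ.orderIsoOfFin hτ) j).val with hM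
  have hminor : colMinor M p = (C.submatrix id fun i => ((σ.orderIsoOfFin hσ) i).val).det := by
    unfold colMinor
    congr 1
    ext r i
    simp only [hM, Matrix.submatrix_apply, id_eq, ← Finset.coe_orderIsoOfFin_apply]
    rw [hpi i]
  rw [det_cmat_expand C hτ, ← hM, ← hminor]
  rcases hor with hor | hor
  · exact mul_pos (Finset.sum_pos (fun j _ => hor j) Finset.univ_nonempty) (hor p)
  · refine mul_pos_of_neg_of_neg ?_ (hor p)
    have := Finset.sum_pos (fun j (_ : j ∈ Finset.univ) => neg_pos.2 (hor j))
      Finset.univ_nonempty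
    rw [Finset.sum_neg_distrib] at this
    linarith







lemma range_pts {n k : ℕ} {α : Type*} (a : Fin n → α) {σ : Finset (Fin n)} (hσ : σ.card = k) :
    Set.range (fun m : Fin k => a ((σ.orderIsoOfFin hσ) m).val) = a '' ↑σ := by
  rw [show (fun m : Fin k => a ((σ.orderIsoOfFin hσ) m).val) =
      a ∘ (fun m => ((σ.orderIsoOfFin hσ) m).val) from rfl, Set.range_comp]
  congr 1
  have h : (fun m : Fin k => ((σ.orderIsoOfFin hσ) m).val) = ⇑(σ.orderEmbOfFin hσ) := by
    funext m; exact Finset.coe_orderIsoOfFin_apply ..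
  rw [h, Finset.range_orderEmbOfFin]

lemma coord_centroid {d n : ℕ} (hd : 1 ≤ d) (a : Fin n → Fin d → ℝ) {τ σ : Finset (Fin n)}
    (hτ : τ.card = d + 1) (hσ : σ.card = d)
    (b₁ : AffineBasis (Fin (d + 1)) ℝ (Fin d → ℝ))
    (hb : ∀ j, b₁ j = a ((τ.orderIsoOfFin hτ) j).val)
    (p : Fin (d + 1))
    (hpi : ∀ i, ((τ.orderIsoOfFin hτ) (p.succAbove i)).val = ((σ.orderIsoOfFin hσ) i).val)
    (i : Fin (d + 1)) :
    b₁.coord i (Finset.univ.centroid ℝ (fun m : Fin d => a ((σ.orderIsoOfFin hσ) m).val)) =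
      if i = p then 0 else (d : ℝ)⁻¹ := by
  classical
  have hne : (Finset.univ : Finset (Fin d)).Nonempty := ⟨⟨0, hd⟩, Finset.mem_univ _⟩
  have hwsum := Finset.sum_centroidWeights_eq_one_of_nonempty ℝ (Finset.univ : Finset (Fin d)) hne
  rw [Finset.centroid_def, Finset.map_affineCombination _ _ _ hwsum (b₁.coord i),
    Finset.affineCombination_eq_linear_combination _ _ _ hwsum]
  have hpt : ∀ m : Fin d, (b₁.coord i) (a ((σ.orderIsoOfFin hσ) m).val) =
      if i = p.succAbove m then 1 else 0 := by
    intro m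
    rw [← hpi m, ← hb, AffineBasis.coord_apply]
  simp only [Function.comp_apply, smul_eq_mul, hpt, Finset.centroidWeights_apply]
  rcases eq_or_ne i p with rfl | hip
  · rw [Finset.sum_eq_zero]
    · simp
    intro m _
    rw [if_neg, mul_zero]
    exact fun hcon => (Fin.succAbove_ne i m) hcon.symm
  · obtain ⟨m₀, hm₀⟩ := Fin.exists_succAbove_eq hip
    rw [if_neg hip, Finset.sum_eq_single m₀]
    · rw [if_pos hm₀.symm, mul_one, Finset.card_univ, Fintype.card_fin]
    · intro m _ hm
      rw [if_neg, mul_zero]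
      intro hcon
      exact hm (Fin.succAbove_right_injective (p := p) (hm₀.trans hcon).symm)
    · intro h; exact absurd (Finset.mem_univ m₀) h




lemma apex_neg {d n : ℕ} (hd : 1 ≤ d) (a : Fin n → Fin d → ℝ) {τ τ' σ : Finset (Fin n)}
    (hτ : τ.card = d + 1) (hτ' : τ'.card = d + 1) (hσ : σ.card = d)
    {v v' : Fin n} (hvτ : v ∈ τ) (hv'τ' : v' ∈ τ')
    (hindepτ : AffineIndependent ℝ (fun j : Fin (d + 1) => a ((τ.orderIsoOfFin hτ) j).val))
    (hindepτ' : AffineIndependent ℝ (fun j : Fin (d + 1) => a ((τ'.orderIsoOfFin hτ') j).val))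
    (hcap : convexHull ℝ (a '' ↑τ) ∩ convexHull ℝ (a '' ↑τ') = convexHull ℝ (a '' ↑σ))
    (hστ : σ ⊆ τ)
    (p p' : Fin (d + 1))
    (hp0 : ((τ.orderIsoOfFin hτ) p).val = v)
    (hpi : ∀ i, ((τ.orderIsoOfFin hτ) (p.succAbove i)).val = ((σ.orderIsoOfFin hσ) i).val)
    (hp0' : ((τ'.orderIsoOfFin hτ') p').val = v')
    (hpi' : ∀ i, ((τ'.orderIsoOfFin hτ') (p'.succAbove i)).val = ((σ.orderIsoOfFin hσ) i).val) :
    (cmat (Fin.cons (lift1 (a v))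
        (fun i => lift1 (a ((σ.orderIsoOfFin hσ) i).val)) : Fin (d+1) → Fin (d+1) → ℝ)).det *
      (cmat (Fin.cons (lift1 (a v'))
        (fun i => lift1 (a ((σ.orderIsoOfFin hσ) i).val)) : Fin (d+1) → Fin (d+1) → ℝ)).det
      < 0 := by
  classical
  set sA : Fin d → Fin (d + 1) → ℝ := fun i => lift1 (a ((σ.orderIsoOfFin hσ) i).val) with hsA
  set KAv := (cmat (Fin.cons (lift1 (a v)) sA : Fin (d+1) → Fin (d+1) → ℝ)).det with hKAv
  set KAv' := (cmat (Fin.cons (lift1 (a v')) sA : Fin (d+1) → Fin (d+1) → ℝ)).det with hKAv'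
  -- nonvanishing
  have hdetτ : (cmat fun j => lift1 (a ((τ.orderIsoOfFin hτ) j).val)).det ≠ 0 :=
    det_cmat_ne_zero _ hindepτ
  have hdetτ' : (cmat fun j => lift1 (a ((τ'.orderIsoOfFin hτ') j).val)).det ≠ 0 :=
    det_cmat_ne_zero _ hindepτ'
  have hreA := det_rearrange (fun i => lift1 (a i)) hτ hσ p hp0 hpi
  have hreA' := det_rearrange (fun i => lift1 (a i)) hτ' hσ p' hp0' hpi'
  have hKAv_ne : KAv ≠ 0 := by
    intro h0
    rw [hreA, ← hsA, ← hKAv, h0, mul_zero] at hdetτ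
    exact hdetτ rfl
  have hKAv'_ne : KAv' ≠ 0 := by
    intro h0
    rw [hreA', ← hsA, ← hKAv', h0, mul_zero] at hdetτ'
    exact hdetτ' rfl
  -- suppose not
  rcases lt_trichotomy (KAv * KAv') 0 with hneg | heq | hpos
  · exact hneg
  · exact absurd heq (mul_ne_zero hKAv_ne hKAv'_ne)
  exfalso
  -- affine bases
  have hcardfr : Fintype.card (Fin (d + 1)) = Module.finrank ℝ (Fin d → ℝ) + 1 := by
    simp [Module.finrank_fin_fun]
  have htot : affineSpan ℝ (Set.range fun j : Fin (d + 1) =>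
      a ((τ.orderIsoOfFin hτ) j).val) = ⊤ :=
    hindepτ.affineSpan_eq_top_iff_card_eq_finrank_add_one.2 hcardfr
  have htot' : affineSpan ℝ (Set.range fun j : Fin (d + 1) =>
      a ((τ'.orderIsoOfFin hτ') j).val) = ⊤ :=
    hindepτ'.affineSpan_eq_top_iff_card_eq_finrank_add_one.2 hcardfr
  set b₁ : AffineBasis (Fin (d + 1)) ℝ (Fin d → ℝ) := ⟨_, hindepτ, htot⟩ with hb₁
  set b₂ : AffineBasis (Fin (d + 1)) ℝ (Fin d → ℝ) := ⟨_, hindepτ', htot'⟩ with hb₂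
  have hb₁j : ∀ j, b₁ j = a ((τ.orderIsoOfFin hτ) j).val := fun j => rfl
  have hb₂j : ∀ j, b₂ j = a ((τ'.orderIsoOfFin hτ') j).val := fun j => rfl
  set c : Fin (d + 1) → ℝ := fun j => b₂.coord j (a v) with hc
  have hcsum : ∑ j, c j = 1 := b₂.sum_coord_apply_eq_one (a v)
  have havcomb : a v = ∑ j, c j • b₂ j := (b₂.linear_combination_coord_eq_self (a v)).symm
  -- lift the combination
  have hlift : lift1 (a v) = ∑ j, c j • lift1 (a ((τ'.orderIsoOfFin hτ') j).val) := by
    funext r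
    refine Fin.cases ?_ (fun s => ?_) r
    · simp only [lift1, Fin.cons_zero, Finset.sum_apply, Pi.smul_apply, smul_eq_mul]
      simp only [Fin.cons_zero, mul_one]
      exact hcsum.symm
    · simp only [lift1, Fin.cons_succ, Finset.sum_apply, Pi.smul_apply, smul_eq_mul]
      have := congrFun havcomb s
      simpa [Finset.sum_apply, hb₂j] using this
  -- Cramer: KAv = c p' * KAv'
  have hcramer : KAv = c p' * KAv' := by
    rw [hKAv, hlift, det_cmat_cons_sum]
    rw [Finset.sum_eq_single p']
    · rw [hp0']
    · intro j _ hj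
      obtain ⟨m, hm⟩ := Fin.exists_succAbove_eq hj
      have hcol : lift1 (a ((τ'.orderIsoOfFin hτ') j).val) = sA m := by
        rw [hsA, ← hm, hpi' m]
      rw [hcol]
      have hzero : (cmat (Fin.cons (sA m) sA : Fin (d+1) → Fin (d+1) → ℝ)).det = 0 := by
        apply Matrix.det_zero_of_column_eq (i := 0) (j := m.succ) (Fin.succ_ne_zero m).symm
        intro k
        simp [cmat]
      rw [hzero, mul_zero]
    · intro h; exact absurd (Finset.mem_univ p') h
  have hcp' : 0 < c p' := by
    rw [hcramer] at hpos
    nlinarith [sq_nonneg KAv', sq_abs KAv']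
  -- geometry
  set spts : Fin d → (Fin d → ℝ) := fun m => a ((σ.orderIsoOfFin hσ) m).val with hspts
  set b : Fin d → ℝ := Finset.univ.centroid ℝ spts with hbdef
  have hne : (Finset.univ : Finset (Fin d)).Nonempty := ⟨⟨0, hd⟩, Finset.mem_univ _⟩
  have hwsum := Finset.sum_centroidWeights_eq_one_of_nonempty ℝ (Finset.univ : Finset (Fin d)) hne
  have hbσ : b ∈ convexHull ℝ (a '' ↑σ) := by
    rw [hbdef, Finset.centroid_def]
    have := affineCombination_mem_convexHull
      (s := (Finset.univ : Finset (Fin d))) (v := spts)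
      (w := (Finset.univ : Finset (Fin d)).centroidWeights ℝ)
      (fun i _ => by simp [Finset.centroidWeights_apply]) hwsum
    rwa [hspts, range_pts a hσ] at this
  -- epsilon
  set δ : ℝ := (d : ℝ)⁻¹ with hδdef
  have hδ : 0 < δ := by
    rw [hδdef]
    have : (0:ℝ) < d := by exact_mod_cast hd
    positivity
  set G : ℝ := Finset.univ.sup' ⟨p', Finset.mem_univ p'⟩ (fun j => |c j|) with hGdef
  have hGc : ∀ j, |c j| ≤ G := fun j => Finset.le_sup' (fun j => |c j|) (Finset.mem_univ j)
  have hG : 0 ≤ G := le_trans (abs_nonneg (c p')) (hGc p')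
  have hden : 0 < δ + 1 + G := by linarith
  set ε : ℝ := δ / (δ + 1 + G) with hεdef
  have hε : 0 < ε := div_pos hδ hden
  have hεmul : ε * (δ + 1 + G) = δ := div_mul_cancel₀ δ (ne_of_gt hden)
  have hε1 : ε ≤ 1 := by
    rw [hεdef, div_le_one hden]; linarith
  set x : Fin d → ℝ := AffineMap.lineMap b (a v) ε with hxdef
  -- x in conv τ
  have hbτ : b ∈ convexHull ℝ (a '' ↑τ) :=
    convexHull_mono (Set.image_mono (by exact_mod_cast Finset.coe_subset.2 hστ)) hbσ
  have havτ : a v ∈ convexHull ℝ (a '' ↑τ) :=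
    subset_convexHull ℝ _ ⟨v, by simpa using hvτ, rfl⟩
  have hxτ : x ∈ convexHull ℝ (a '' ↑τ) :=
    (convex_convexHull ℝ _).lineMap_mem hbτ havτ ⟨le_of_lt hε, hε1⟩
  -- coordinates of x with respect to b₂
  have hcoordb₂ : ∀ i, b₂.coord i b = if i = p' then 0 else δ := by
    intro i
    rw [hbdef, hspts]
    exact coord_centroid hd a hτ' hσ b₂ hb₂j p' hpi' i
  have hcoordx : ∀ i, b₂.coord i x = (1 - ε) * (b₂.coord i b) + ε * c i := by
    intro i
    rw [hxdef, AffineMap.apply_lineMap, AffineMap.lineMap_apply_module]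
    simp [hc, smul_eq_mul]
  have hwnonneg : ∀ i, 0 ≤ b₂.coord i x := by
    intro i
    rw [hcoordx i, hcoordb₂ i]
    rcases eq_or_ne i p' with rfl | hip
    · rw [if_pos rfl, mul_zero, zero_add]
      positivity
    · rw [if_neg hip]
      have hci : -G ≤ c i := neg_le_of_abs_le (hGc i)
      nlinarith [hε, hε1, hδ, hεmul, hci, hG]
  have hxτ' : x ∈ convexHull ℝ (a '' ↑τ') := by
    have hsum1 : ∑ i, b₂.coord i x = 1 := b₂.sum_coord_apply_eq_one x
    have hxcomb : Finset.univ.affineCombination ℝ (⇑b₂) (fun i => b₂.coord i x) = x :=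
      b₂.affineCombination_coord_eq_self x
    have := affineCombination_mem_convexHull (s := (Finset.univ : Finset (Fin (d+1))))
      (v := ⇑b₂) (w := fun i => b₂.coord i x) (fun i _ => hwnonneg i) hsum1
    rw [hxcomb] at this
    have hrange : Set.range ⇑b₂ = a '' ↑τ' := range_pts a hτ'
    rwa [hrange] at this
  -- x in conv σ
  have hxσ : x ∈ convexHull ℝ (a '' ↑σ) := by
    rw [← hcap]; exact ⟨hxτ, hxτ'⟩
  -- but coord of x wrt b₁ at p is ε > 0, while it vanishes on conv σ
  have hcoordp : b₁.coord p x = ε := by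
    rw [hxdef, AffineMap.apply_lineMap, AffineMap.lineMap_apply_module]
    have h1 : b₁.coord p b = 0 := by
      rw [hbdef, hspts, coord_centroid hd a hτ hσ b₁ hb₁j p hpi p, if_pos rfl]
    have h2 : b₁.coord p (a v) = 1 := by
      rw [← hp0, ← hb₁j]
      exact b₁.coord_apply_eq p
    rw [h1, h2]
    simp
  have hvanish : convexHull ℝ (a '' ↑σ) ⊆ (b₁.coord p) ⁻¹' {0} := by
    apply convexHull_min
    · rintro y ⟨i, hi, rfl⟩
      have hiσ : i ∈ σ := by simpa using hi
      set m := (σ.orderIsoOfFin hσ).symm ⟨i, hiσ⟩ with hm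
      have him : ((σ.orderIsoOfFin hσ) m).val = i := by
        rw [hm, OrderIso.apply_symm_apply]
      have : a i = b₁ (p.succAbove m) := by
        rw [hb₁j, hpi m, him]
      simp only [Set.mem_preimage, Set.mem_singleton_iff, this]
      exact b₁.coord_apply_ne (Fin.succAbove_ne p m).symm
    · exact (convex_singleton 0).affine_preimage (b₁.coord p)
  have := hvanish hxσ
  simp only [Set.mem_preimage, Set.mem_singleton_iff, hcoordp] at this
  exact absurd this (ne_of_gt hε)




lemma key_neg {d n : ℕ} (hd : 1 ≤ d) (a : Fin n → Fin d → ℝ)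
    (C : Matrix (Fin d) (Fin n) ℝ) {τ τ' : Finset (Fin n)}
    (hτ : τ.card = d + 1) (hτ' : τ'.card = d + 1)
    (hindepτ : AffineIndependent ℝ (fun j : Fin (d + 1) => a ((τ.orderIsoOfFin hτ) j).val))
    (hindepτ' : AffineIndependent ℝ (fun j : Fin (d + 1) => a ((τ'.orderIsoOfFin hτ') j).val))
    (horτ : IsOriented (C.submatrix id fun j => ((τ.orderIsoOfFin hτ) j).val))
    (horτ' : IsOriented (C.submatrix id fun j => ((τ'.orderIsoOfFin hτ') j).val))
    (hcap : convexHull ℝ (a '' ↑τ) ∩ convexHull ℝ (a '' ↑τ') = convexHull ℝ (a '' ↑(τ ∩ τ')))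
    (hne : τ ≠ τ') (hcd : (τ ∩ τ').card = d) :
    ((cmat fun j => lift1 (a ((τ.orderIsoOfFin hτ) j).val)).det *
      (cmat fun j => lift1 fun r => C r ((τ.orderIsoOfFin hτ) j).val).det) *
    ((cmat fun j => lift1 (a ((τ'.orderIsoOfFin hτ') j).val)).det *
      (cmat fun j => lift1 fun r => C r ((τ'.orderIsoOfFin hτ') j).val).det) < 0 := by
  classical
  -- apexes
  have hsd : (τ \ τ').card = 1 := by
    have := Finset.card_inter_add_card_sdiff τ τ'
    omega
  obtain ⟨v, hv⟩ := Finset.card_eq_one.1 hsd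
  have hvτ : v ∈ τ := by
    have : v ∈ τ \ τ' := hv ▸ Finset.mem_singleton_self v
    exact (Finset.mem_sdiff.1 this).1
  have hvτ'n : v ∉ τ' := by
    have : v ∈ τ \ τ' := hv ▸ Finset.mem_singleton_self v
    exact (Finset.mem_sdiff.1 this).2
  have herase : τ.erase v = τ ∩ τ' := by
    ext x
    simp only [Finset.mem_erase, Finset.mem_inter]
    constructor
    · rintro ⟨hxv, hxτ⟩
      refine ⟨hxτ, ?_⟩
      by_contra hxτ'
      have : x ∈ τ \ τ' := Finset.mem_sdiff.2 ⟨hxτ, hxτ'⟩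
      rw [hv, Finset.mem_singleton] at this
      exact hxv this
    · rintro ⟨hxτ, hxτ'⟩
      exact ⟨fun hxv => hvτ'n (hxv ▸ hxτ'), hxτ⟩
  have hsd' : (τ' \ τ).card = 1 := by
    have h1 := Finset.card_inter_add_card_sdiff τ' τ
    rw [Finset.inter_comm] at h1
    omega
  obtain ⟨v', hv'⟩ := Finset.card_eq_one.1 hsd'
  have hv'τ' : v' ∈ τ' := by
    have : v' ∈ τ' \ τ := hv' ▸ Finset.mem_singleton_self v'
    exact (Finset.mem_sdiff.1 this).1
  have hv'τn : v' ∉ τ := by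
    have : v' ∈ τ' \ τ := hv' ▸ Finset.mem_singleton_self v'
    exact (Finset.mem_sdiff.1 this).2
  have herase' : τ'.erase v' = τ ∩ τ' := by
    rw [Finset.inter_comm]
    ext x
    simp only [Finset.mem_erase, Finset.mem_inter]
    constructor
    · rintro ⟨hxv, hxτ'⟩
      refine ⟨hxτ', ?_⟩
      by_contra hxτ
      have : x ∈ τ' \ τ := Finset.mem_sdiff.2 ⟨hxτ', hxτ⟩
      rw [hv', Finset.mem_singleton] at this
      exact hxv this
    · rintro ⟨hxτ', hxτ⟩
      exact ⟨fun hxv => hv'τn (hxv ▸ hxτ), hxτ'⟩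
  -- enumerations
  obtain ⟨p, hp0, hpi⟩ := enum_erase hτ hcd hvτ herase
  obtain ⟨p', hp0', hpi'⟩ := enum_erase hτ' hcd hv'τ' herase'
  -- determinant rearrangements
  set sA : Fin d → Fin (d + 1) → ℝ :=
    fun i => lift1 (a (((τ ∩ τ').orderIsoOfFin hcd) i).val) with hsA
  set sC : Fin d → Fin (d + 1) → ℝ :=
    fun i => lift1 fun r => C r (((τ ∩ τ').orderIsoOfFin hcd) i).val with hsC
  set KAv := (cmat (Fin.cons (lift1 (a v)) sA : Fin (d+1) → Fin (d+1) → ℝ)).det with hKAvdef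
  set KAv' := (cmat (Fin.cons (lift1 (a v')) sA : Fin (d+1) → Fin (d+1) → ℝ)).det with hKAv'def
  set KCv := (cmat (Fin.cons (lift1 fun r => C r v) sC :
    Fin (d+1) → Fin (d+1) → ℝ)).det with hKCvdef
  set KCv' := (cmat (Fin.cons (lift1 fun r => C r v') sC :
    Fin (d+1) → Fin (d+1) → ℝ)).det with hKCv'def
  have hA : (cmat fun j => lift1 (a ((τ.orderIsoOfFin hτ) j).val)).det =
      (-1 : ℝ) ^ (p : ℕ) * KAv :=
    det_rearrange (fun i => lift1 (a i)) hτ hcd p hp0 hpi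
  have hA' : (cmat fun j => lift1 (a ((τ'.orderIsoOfFin hτ') j).val)).det =
      (-1 : ℝ) ^ (p' : ℕ) * KAv' :=
    det_rearrange (fun i => lift1 (a i)) hτ' hcd p' hp0' hpi'
  have hCd : (cmat fun j => lift1 fun r => C r ((τ.orderIsoOfFin hτ) j).val).det =
      (-1 : ℝ) ^ (p : ℕ) * KCv :=
    det_rearrange (fun i => lift1 fun r => C r i) hτ hcd p hp0 hpi
  have hCd' : (cmat fun j => lift1 fun r => C r ((τ'.orderIsoOfFin hτ') j).val).det =
      (-1 : ℝ) ^ (p' : ℕ) * KCv' :=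
    det_rearrange (fun i => lift1 fun r => C r i) hτ' hcd p' hp0' hpi'
  -- positivity of the C part
  set detCσ := (C.submatrix id fun i => (((τ ∩ τ').orderIsoOfFin hcd) i).val).det with hdetCσ
  have hposτ := oriented_pos C hτ hcd p hpi horτ
  have hposτ' := oriented_pos C hτ' hcd p' hpi' horτ'
  have hsq : (-1 : ℝ) ^ (p : ℕ) * (-1 : ℝ) ^ (p : ℕ) = 1 := by
    rw [← pow_add]; exact Even.neg_one_pow ⟨(p : ℕ), rfl⟩
  have hsq' : (-1 : ℝ) ^ (p' : ℕ) * (-1 : ℝ) ^ (p' : ℕ) = 1 := by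
    rw [← pow_add]; exact Even.neg_one_pow ⟨(p' : ℕ), rfl⟩
  rw [hCd, ← hdetCσ] at hposτ
  rw [hCd', ← hdetCσ] at hposτ'
  have h1 : 0 < KCv * detCσ := by
    have heq : (-1 : ℝ) ^ (p : ℕ) * KCv * ((-1 : ℝ) ^ (p : ℕ) * detCσ) =
        ((-1 : ℝ) ^ (p : ℕ) * (-1 : ℝ) ^ (p : ℕ)) * (KCv * detCσ) := by ring
    rw [heq, hsq, one_mul] at hposτ
    exact hposτ
  have h2 : 0 < KCv' * detCσ := by
    have heq : (-1 : ℝ) ^ (p' : ℕ) * KCv' * ((-1 : ℝ) ^ (p' : ℕ) * detCσ) =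
        ((-1 : ℝ) ^ (p' : ℕ) * (-1 : ℝ) ^ (p' : ℕ)) * (KCv' * detCσ) := by ring
    rw [heq, hsq', one_mul] at hposτ'
    exact hposτ'
  have hσsq : 0 < detCσ ^ 2 := by
    have hσne : detCσ ≠ 0 := by
      intro h0
      rw [h0, mul_zero] at h1
      exact lt_irrefl 0 h1
    positivity
  have hKC : 0 < KCv * KCv' := by nlinarith [mul_pos h1 h2, hσsq]
  -- negativity of the A part
  have hKA : KAv * KAv' < 0 :=
    apex_neg hd a hτ hτ' hcd hvτ hv'τ' hindepτ hindepτ' hcap Finset.inter_subset_left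
      p p' hp0 hpi hp0' hpi'
  -- conclude
  rw [hA, hA', hCd, hCd']
  have hrw : (-1 : ℝ) ^ (p : ℕ) * KAv * ((-1 : ℝ) ^ (p : ℕ) * KCv) *
      ((-1 : ℝ) ^ (p' : ℕ) * KAv' * ((-1 : ℝ) ^ (p' : ℕ) * KCv')) =
      (KAv * KAv') * (KCv * KCv') := by
    calc (-1 : ℝ) ^ (p : ℕ) * KAv * ((-1 : ℝ) ^ (p : ℕ) * KCv) *
        ((-1 : ℝ) ^ (p' : ℕ) * KAv' * ((-1 : ℝ) ^ (p' : ℕ) * KCv')) =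
        (((-1 : ℝ) ^ (p : ℕ) * (-1 : ℝ) ^ (p : ℕ)) *
          ((-1 : ℝ) ^ (p' : ℕ) * (-1 : ℝ) ^ (p' : ℕ))) *
          ((KAv * KAv') * (KCv * KCv')) := by ring
      _ = (KAv * KAv') * (KCv * KCv') := by rw [hsq, hsq', one_mul, one_mul]
  rw [hrw]
  exact mul_neg_of_neg_of_pos hKA hKC

end Stmt7Aux

open Stmt7Aux

theorem stmt7 (d n : ℕ) (hd : 1 ≤ d) (a : Fin n → Fin d → ℝ)
    (C : Matrix (Fin d) (Fin n) ℝ) (Γ : Finset (Finset (Fin n)))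
    (hcard : ∀ τ ∈ Γ, τ.card = d + 1)
    (hindep : ∀ τ ∈ Γ, AffineIndependent ℝ fun i : {x // x ∈ τ} => a i.val)
    (hcomplex : ∀ τ ∈ Γ, ∀ τ' ∈ Γ,
      convexHull ℝ (a '' ↑τ) ∩ convexHull ℝ (a '' ↑τ') = convexHull ℝ (a '' ↑(τ ∩ τ')))
    (hdec : ∀ τ ∈ Γ, Decorates C τ)
    (At Ct : ∀ τ : Finset (Fin n), τ ∈ Γ → Matrix (Fin (d + 1)) (Fin (d + 1)) ℝ)
    (hAt : ∀ τ (h : τ ∈ Γ), At τ h = Matrix.of (Fin.cons (fun _ => (1 : ℝ))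
      (fun r j => a ((τ.orderIsoOfFin (hcard τ h)) j).val r)))
    (hCt : ∀ τ (h : τ ∈ Γ), Ct τ h = Matrix.of (Fin.cons (fun _ => (1 : ℝ))
      (fun r j => C r ((τ.orderIsoOfFin (hcard τ h)) j).val))) :
    (∃ χ : Finset (Fin n) → Bool,
      ∀ τ ∈ Γ, ∀ τ' ∈ Γ, τ ≠ τ' → (τ ∩ τ').card = d → χ τ ≠ χ τ') ∧
    (∀ τ (h : τ ∈ Γ) τ' (h' : τ' ∈ Γ), τ ≠ τ' → (τ ∩ τ').card = d →
      Real.sign ((At τ h).det * (Ct τ h).det) = - Real.sign ((At τ' h').det * (Ct τ' h').det)) := by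
  have hAt' : ∀ τ (h : τ ∈ Γ), At τ h =
      cmat (fun j => lift1 (a ((τ.orderIsoOfFin (hcard τ h)) j).val)) := by
    intro τ h
    rw [hAt τ h]
    ext r j
    refine Fin.cases ?_ (fun s => ?_) r <;> simp [cmat, lift1]
  have hCt' : ∀ τ (h : τ ∈ Γ), Ct τ h =
      cmat (fun j => lift1 fun r => C r ((τ.orderIsoOfFin (hcard τ h)) j).val) := by
    intro τ h
    rw [hCt τ h]
    ext r j
    refine Fin.cases ?_ (fun s => ?_) r <;> simp [cmat, lift1]
  have key : ∀ τ (h : τ ∈ Γ) τ' (h' : τ' ∈ Γ), τ ≠ τ' → (τ ∩ τ').card = d →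
      ((At τ h).det * (Ct τ h).det) * ((At τ' h').det * (Ct τ' h').det) < 0 := by
    intro τ h τ' h' hne hcd
    rw [hAt' τ h, hCt' τ h, hAt' τ' h', hCt' τ' h']
    have hindepτ : AffineIndependent ℝ
        (fun j : Fin (d + 1) => a ((τ.orderIsoOfFin (hcard τ h)) j).val) :=
      (hindep τ h).comp_embedding (τ.orderIsoOfFin (hcard τ h)).toEquiv.toEmbedding
    have hindepτ' : AffineIndependent ℝ
        (fun j : Fin (d + 1) => a ((τ'.orderIsoOfFin (hcard τ' h')) j).val) :=
      (hindep τ' h').comp_embedding (τ'.orderIsoOfFin (hcard τ' h')).toEquiv.toEmbedding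
    obtain ⟨hc2, horτ⟩ := hdec τ h
    obtain ⟨hc2', horτ'⟩ := hdec τ' h'
    exact key_neg hd a C (hcard τ h) (hcard τ' h') hindepτ hindepτ' horτ horτ'
      (hcomplex τ h τ' h') hne hcd
  constructor
  · refine ⟨fun τ => if h : τ ∈ Γ then
      decide (0 < (At τ h).det * (Ct τ h).det) else false, ?_⟩
    intro τ hτ τ' hτ' hne hcd
    have hk := key τ hτ τ' hτ' hne hcd
    simp only [dif_pos hτ, dif_pos hτ']
    intro hcon
    rw [decide_eq_decide] at hcon
    rcases lt_trichotomy ((At τ hτ).det * (Ct τ hτ).det) 0 with h1 | h1 | h1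
    · have h2 : 0 < (At τ' hτ').det * (Ct τ' hτ').det := by nlinarith
      exact absurd (hcon.mpr h2) (not_lt.2 (le_of_lt h1))
    · rw [h1, zero_mul] at hk
      exact lt_irrefl 0 hk
    · have h2 : (At τ' hτ').det * (Ct τ' hτ').det < 0 := by nlinarith
      exact absurd (hcon.mp h1) (not_lt.2 (le_of_lt h2))
  · intro τ h τ' h' hne hcd
    have hk := key τ h τ' h' hne hcd
    rcases lt_trichotomy ((At τ h).det * (Ct τ h).det) 0 with h1 | h1 | h1
    · have h2 : 0 < (At τ' h').det * (Ct τ' h').det := by nlinarith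
      rw [Real.sign_of_neg h1, Real.sign_of_pos h2]
    · exfalso
      rw [h1, zero_mul] at hk
      exact lt_irrefl 0 hk
    · have h2 : (At τ' h').det * (Ct τ' h').det < 0 := by nlinarith
      rw [Real.sign_of_pos h1, Real.sign_of_neg h2]
      norm_num
end
end

section
/- Let e_1, …, e_d be the canonical basis vectors of ℝ^d and let e_{d+1} = (−1,…,−1) ∈ ℝ^d. Let Γ be a pure d-dimensional geometric simplicial complex with vertices in a point configuration A = {a_1,…,a_n} ⊂ ℝ^d, and suppose Γ is balanced with (d+1)-coloring γ: A → {1,…,d+1} (γ takes different values on the two endpoints of every edge of Γ). Then the d×n matrix C whose i-th column is e_{γ(a_i)} positively decorates every d-simplex of Γ. -/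
open Matrix

noncomputable section

attribute [local instance] Classical.propDecidable

/-! Auxiliary material -/

def Efun (d : ℕ) (c : Fin (d+1)) (r : Fin d) : ℝ :=
  if (c : ℕ) = d then -1 else if (r : ℕ) = (c : ℕ) then 1 else 0

def Bmat (d : ℕ) (k : Fin (d+1)) : Matrix (Fin (d+1)) (Fin (d+1)) ℝ :=
  Matrix.of (Fin.cons (fun c => if c = k then 1 else 0) (fun r c => Efun d c r))

lemma detB_last (d : ℕ) : (Bmat d (Fin.last d)).det = (-1)^d := by
  rw [Matrix.det_succ_row_zero]
  rw [Finset.sum_eq_single (Fin.last d)]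
  · have h1 : (Bmat d (Fin.last d)) 0 (Fin.last d) = 1 := by
      simp [Bmat, Fin.cons_zero]
    rw [h1]
    have h2 : (Bmat d (Fin.last d)).submatrix Fin.succ (Fin.last d).succAbove = 1 := by
      ext r c
      simp only [submatrix_apply, Fin.succAbove_last, Bmat, Matrix.of_apply, Fin.cons_succ,
        Efun, Fin.coe_castSucc]
      have hc : (c : ℕ) ≠ d := Nat.ne_of_lt c.isLt
      rw [if_neg hc]
      by_cases h : (r : ℕ) = (c : ℕ)
      · rw [if_pos h]
        rw [show r = c from Fin.ext h, Matrix.one_apply_eq]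
      · rw [if_neg h, Matrix.one_apply_ne]
        exact fun hh => h (congrArg Fin.val hh)
    rw [h2, Matrix.det_one]
    simp [Fin.val_last]
  · intro j _ hj
    have : (Bmat d (Fin.last d)) 0 j = 0 := by
      simp [Bmat, Fin.cons_zero, hj]
    rw [this]; ring
  · simp

lemma detB (d : ℕ) (k : Fin (d+1)) : (Bmat d k).det = (-1)^d := by
  by_cases hk : k = Fin.last d
  · rw [hk, detB_last]
  · obtain ⟨k', rfl⟩ := Fin.exists_castSucc_eq.mpr hk
    have hB : Bmat d k'.castSucc
        = Matrix.updateRow (Bmat d (Fin.last d)) 0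
            ((Bmat d (Fin.last d)) 0 + (Bmat d (Fin.last d)) k'.succ) := by
      ext r c
      refine Fin.cases ?_ ?_ r
      · rw [Matrix.updateRow_self]
        simp only [Bmat, Matrix.of_apply, Fin.cons_zero, Fin.cons_succ, Pi.add_apply, Efun]
        by_cases hc : c = k'.castSucc
        · subst hc
          have h1 : (k'.castSucc : ℕ) ≠ d := by simpa using Nat.ne_of_lt k'.isLt
          have h2 : k'.castSucc ≠ Fin.last d := hk
          rw [if_pos rfl, if_neg h2, if_neg h1, if_pos (by simp)]
          norm_num
        · rw [if_neg hc]
          by_cases hcl : c = Fin.last d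
          · subst hcl
            rw [if_pos rfl, if_pos (by simp [Fin.val_last])]
            norm_num
          · rw [if_neg hcl]
            have h1 : (c : ℕ) ≠ d := fun h => hcl (Fin.ext (by simp [Fin.val_last, h]))
            rw [if_neg h1, if_neg (fun h => hc (Fin.ext (by simpa using h.symm)))]
            norm_num
      · intro r'
        rw [Matrix.updateRow_ne (Fin.succ_ne_zero r')]
        simp [Bmat]
    rw [hB, Matrix.det_updateRow_add_self _ (Fin.succ_ne_zero k').symm, detB_last]

lemma key (d : ℕ) (π : Equiv.Perm (Fin (d+1)))
    (M : Matrix (Fin d) (Fin (d+1)) ℝ) (hM : ∀ r j, M r j = Efun d (π j) r)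
    (i : Fin (d+1)) :
    (-1 : ℝ) ^ (i : ℕ) * colMinor M i = ((Equiv.Perm.sign π : ℤ) : ℝ) * (-1)^d := by
  set N : Matrix (Fin (d+1)) (Fin (d+1)) ℝ :=
    Matrix.of (Fin.cons (fun j => if j = i then (1:ℝ) else 0) M) with hN
  have hNdet : N.det = (-1 : ℝ) ^ (i : ℕ) * colMinor M i := by
    rw [Matrix.det_succ_row_zero]
    rw [Finset.sum_eq_single i]
    · have h1 : N 0 i = 1 := by simp [hN]; erw [Fin.cons_zero]; simp
      rw [h1, mul_one]
      congr 1
    · intro j _ hj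
      have : N 0 j = 0 := by simp [hN, hj]; erw [Fin.cons_zero]; simp [hj]
      rw [this]; ring
    · simp
  have hNB : N = (Bmat d (π i)).submatrix id π := by
    ext r c
    refine Fin.cases ?_ ?_ r
    · simp only [hN, Matrix.of_apply, submatrix_apply, id_eq, Bmat]
      erw [Fin.cons_zero, Fin.cons_zero]
      by_cases h : c = i
      · rw [if_pos h, if_pos (by rw [h])]
      · rw [if_neg h, if_neg (fun hh => h (π.injective hh))]
    · intro r'
      simp only [hN, Matrix.of_apply, submatrix_apply, id_eq, Bmat]
      erw [Fin.cons_succ, Fin.cons_succ]; rw [hM]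
  rw [← hNdet, hNB, Matrix.det_permute', detB]

theorem stmt8 (d n : ℕ) (hd : 1 ≤ d) (a : Fin n → Fin d → ℝ)
    (Γ : Finset (Finset (Fin n)))
    (hcard : ∀ τ ∈ Γ, τ.card = d + 1)
    (γ : Fin n → Fin (d + 1))
    (hcol : ∀ τ ∈ Γ, ∀ i ∈ τ, ∀ j ∈ τ, i ≠ j → γ i ≠ γ j)
    (E : Fin (d + 1) → Fin d → ℝ)
    (hE : ∀ c r, E c r = if (c : ℕ) = d then -1 else if (r : ℕ) = (c : ℕ) then 1 else 0)
    (C : Matrix (Fin d) (Fin n) ℝ) (hC : ∀ r i, C r i = E (γ i) r) :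
    ∀ τ ∈ Γ, Decorates C τ := by
  intro τ hτ
  have h := hcard τ hτ
  refine ⟨h, ?_⟩
  set f := τ.orderIsoOfFin h with hf
  have hinj : Function.Injective (fun j => γ ((f j : Fin n))) := by
    intro i j hij
    by_contra hne
    exact hcol τ hτ (f i) (f i).2 (f j) (f j).2
      (fun hfe => hne (f.injective (Subtype.ext hfe))) hij
  let π : Equiv.Perm (Fin (d+1)) :=
    Equiv.ofBijective _ (Finite.injective_iff_bijective.mp hinj)
  have hM : ∀ r j, (C.submatrix id fun j => ((τ.orderIsoOfFin h) j).val) r j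
      = Efun d (π j) r := by
    intro r j
    rw [submatrix_apply, id_eq, hC]
    have hπ : π j = γ ((f j : Fin n)) := rfl
    rw [hπ, hE]; rfl
  have hval := key d π _ hM
  have hnz : ((Equiv.Perm.sign π : ℤ) : ℝ) * (-1 : ℝ)^d ≠ 0 := by
    apply mul_ne_zero
    · exact_mod_cast (Equiv.Perm.sign π).ne_zero
    · exact pow_ne_zero _ (by norm_num)
  rcases hnz.lt_or_gt with hneg | hpos
  · right
    intro i
    rw [hval i]; exact hneg
  · left
    intro i
    rw [hval i]; exact hpos
end
end

section
/- Let d ≥ 1 and let d_1 + ⋯ + d_k = d be a partition of d into positive integers. Then there exist strictly totally positive real matrices T^{(1)}, …, T^{(k)} of respective sizes (d_1+1)×d, …, (d_k+1)×d such that every solution in (ℂ∖{0})^d of the system f_1(X) = ⋯ = f_d(X) = 0 lies in the positive orthant (ℝ_{>0})^d, where, in variables X = (X_{uj}) with 1 ≤ u ≤ k and 1 ≤ j ≤ d_u, f_i(X) = ∏_{u=1}^{k} ( (−1)^{d_u+1} T^{(u)}_{d_u+1, i} + Σ_{j=1}^{d_u} (−1)^j T^{(u)}_{j,i} X_{uj}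 ). -/
noncomputable section

/-- A real matrix is strictly totally positive if all its minors of all sizes
are positive. -/
def StrictlyTotallyPositive {p q : ℕ} (T : Matrix (Fin p) (Fin q) ℝ) : Prop :=
  ∀ (r : ℕ) (ri : Fin r → Fin p) (ci : Fin r → Fin q), 1 ≤ r →
    StrictMono ri → StrictMono ci → 0 < (T.submatrix ri ci).det

lemma cauchy_det_pos :
    ∀ (n : ℕ) (x y : Fin n → ℝ), StrictMono x → StrictMono y →
      (∀ i j, 0 < x i + y j) →
      0 < (Matrix.of fun i j => (x i + y j)⁻¹).det := by
  intro n
  induction n with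
  | zero => intro x y _ _ _; simp
  | succ n ih =>
    intro x y hx hy hxy
    set L : Fin (n + 1) := Fin.last n with hL
    have hlt : ∀ j : Fin (n + 1), j ≠ L → j < L := fun j hj =>
      lt_of_le_of_ne (Fin.le_last j) (by simpa [hL] using hj)
    have hne : ∀ i j, x i + y j ≠ 0 := fun i j => (hxy i j).ne'
    set B : Matrix (Fin (n + 1)) (Fin (n + 1)) ℝ :=
      Matrix.of (fun i j => if j = L then (x i + y L)⁻¹ else
        (y L - y j) * ((x i + y L)⁻¹ * (x i + y j)⁻¹)) with hB
    have h1 : (Matrix.of fun i j => (x i + y j)⁻¹).det = B.det := by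
      rw [← Matrix.det_transpose B,
        ← Matrix.det_transpose (Matrix.of fun i j => (x i + y j)⁻¹)]
      apply Matrix.det_eq_of_forall_row_eq_smul_add_const
        (fun j => if j = L then (0 : ℝ) else 1) L (if_pos rfl)
      intro j i
      by_cases hj : j = L
      · subst hj; simp [hB]
      · simp only [Matrix.transpose_apply, Matrix.of_apply, hB, if_neg hj, if_pos rfl, one_mul]
        have h1 := hne i j
        have h2 := hne i L
        simp only [eq_self_iff_true, if_true]
        field_simp
        ring
    set B3 : Matrix (Fin (n + 1)) (Fin (n + 1)) ℝ :=
      Matrix.of (fun i j => if j = L then (1 : ℝ) else (x i + y j)⁻¹) with hB3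
    have h2 : B.det = (∏ i, (x i + y L)⁻¹) *
        ((∏ j, if j = L then (1 : ℝ) else y L - y j) * B3.det) := by
      have heq : B = Matrix.of (fun i j => (x i + y L)⁻¹ *
          (Matrix.of fun i j => (if j = L then (1 : ℝ) else y L - y j) * B3 i j) i j) := by
        ext i j
        by_cases hj : j = L <;> simp [hB, hB3, hj] <;> ring
      rw [heq, Matrix.det_mul_column, Matrix.det_mul_row]
    set B4 : Matrix (Fin (n + 1)) (Fin (n + 1)) ℝ :=
      Matrix.of (fun i j => if i = L then B3 i j else if j = L then (0 : ℝ) else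
        (x L - x i) * ((x i + y j)⁻¹ * (x L + y j)⁻¹)) with hB4
    have h3 : B3.det = B4.det := by
      apply Matrix.det_eq_of_forall_row_eq_smul_add_const
        (fun i => if i = L then (0 : ℝ) else 1) L (if_pos rfl)
      intro i j
      by_cases hi : i = L
      · subst hi; simp [hB4]
      · simp only [hB4, hB3, Matrix.of_apply, if_neg hi, if_pos rfl, one_mul]
        by_cases hj : j = L
        · simp [hj]
        · simp only [if_neg hj]
          have h1 := hne i j
          have h2 := hne L j
          simp only [eq_self_iff_true, if_true]
          field_simp
          ring
    set B6 : Matrix (Fin (n + 1)) (Fin (n + 1)) ℝ :=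
      Matrix.of (fun i j => if i = L then (1 : ℝ) else if j = L then (0 : ℝ) else
        (x i + y j)⁻¹) with hB6
    have h4 : B4.det = (∏ i, if i = L then (1 : ℝ) else x L - x i) *
        ((∏ j, if j = L then (1 : ℝ) else (x L + y j)⁻¹) * B6.det) := by
      have heq : B4 = Matrix.of (fun i j => (if i = L then (1 : ℝ) else x L - x i) *
          (Matrix.of fun i j => (if j = L then (1 : ℝ) else (x L + y j)⁻¹) * B6 i j) i j) := by
        ext i j
        by_cases hi : i = L <;> by_cases hj : j = L <;>
          simp only [hB4, hB6, hB3, Matrix.of_apply, hi, hj, if_true, if_false, ite_true,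
            ite_false, if_pos rfl, one_mul, mul_one, mul_zero] <;> ring
      rw [heq, Matrix.det_mul_column, Matrix.det_mul_row]
    have h5 : B6.det = (Matrix.of fun (i j : Fin n) =>
        (x i.castSucc + y j.castSucc)⁻¹).det := by
      rw [Matrix.det_succ_column B6 L]
      rw [Fintype.sum_eq_single L (fun b hb => by
        have : B6 b L = 0 := by simp [hB6, hb]
        simp [this])]
      have hBLL : B6 L L = 1 := by simp [hB6]
      have hsub : B6.submatrix L.succAbove L.succAbove =
          Matrix.of (fun (i j : Fin n) => (x i.castSucc + y j.castSucc)⁻¹) := by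
        ext i j
        have hi : (L.succAbove i : Fin (n + 1)) ≠ L := by
          rw [hL, Fin.succAbove_last]
          exact (Fin.castSucc_lt_last i).ne
        have hj : (L.succAbove j : Fin (n + 1)) ≠ L := by
          rw [hL, Fin.succAbove_last]
          exact (Fin.castSucc_lt_last j).ne
        have hi' : (i.castSucc : Fin (n + 1)) ≠ Fin.last n := (Fin.castSucc_lt_last i).ne
        have hj' : (j.castSucc : Fin (n + 1)) ≠ Fin.last n := (Fin.castSucc_lt_last j).ne
        simp [hB6, hL, Fin.succAbove_last, hi', hj']
      rw [hBLL, hsub]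
      have : ((-1 : ℝ)) ^ ((L : ℕ) + (L : ℕ)) = 1 := by
        rw [hL, Fin.val_last, ← two_mul, pow_mul, neg_one_sq, one_pow]
      rw [this]
      ring
    have hpos6 : 0 < B6.det := by
      rw [h5]
      exact ih (fun i => x i.castSucc) (fun j => y j.castSucc)
        (hx.comp Fin.strictMono_castSucc) (hy.comp Fin.strictMono_castSucc)
        (fun i j => hxy _ _)
    rw [h1, h2, h3, h4]
    have p1 : 0 < ∏ i, (x i + y L)⁻¹ := Finset.prod_pos fun i _ => inv_pos.2 (hxy i L)
    have p2 : 0 < ∏ j, if j = L then (1 : ℝ) else y L - y j := by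
      apply Finset.prod_pos
      intro j _
      by_cases hj : j = L
      · simp [hj]
      · simp only [if_neg hj]
        exact sub_pos.2 (hy (hlt j hj))
    have p3 : 0 < ∏ i, if i = L then (1 : ℝ) else x L - x i := by
      apply Finset.prod_pos
      intro i _
      by_cases hi : i = L
      · simp [hi]
      · simp only [if_neg hi]
        exact sub_pos.2 (hx (hlt i hi))
    have p4 : 0 < ∏ j, if j = L then (1 : ℝ) else (x L + y j)⁻¹ := by
      apply Finset.prod_pos
      intro j _
      by_cases hj : j = L
      · simp [hj]
      · simp only [if_neg hj]
        exact inv_pos.2 (hxy L j)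
    exact mul_pos p1 (mul_pos p2 (mul_pos p3 (mul_pos p4 hpos6)))

lemma cauchyMat_stp (p q : ℕ) :
    StrictlyTotallyPositive (Matrix.of fun (l : Fin p) (i : Fin q) =>
      (((l : ℕ) : ℝ) + ((i : ℕ) : ℝ) + 1)⁻¹) := by
  intro r ri ci _ hri hci
  have key := cauchy_det_pos r (fun s => ((ri s : ℕ) : ℝ))
    (fun t => ((ci t : ℕ) : ℝ) + 1)
    (fun a b hab => by
      simp only []
      exact_mod_cast Fin.lt_iff_val_lt_val.mp (hri hab))
    (fun a b hab => by
      simp only []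
      have := Fin.lt_iff_val_lt_val.mp (hci hab)
      have : ((ci a : ℕ) : ℝ) < ((ci b : ℕ) : ℝ) := by exact_mod_cast this
      linarith)
    (fun i j => by positivity)
  convert key using 2
  ext s t
  simp [Matrix.submatrix_apply]
  ring_nf

set_option maxHeartbeats 1000000 in
theorem stmt13 (k : ℕ) (dpart : Fin k → ℕ) (hpos : ∀ u, 1 ≤ dpart u)
    (d : ℕ) (hd : d = ∑ u, dpart u) :
    ∃ T : (u : Fin k) → Matrix (Fin (dpart u + 1)) (Fin d) ℝ,
      (∀ u, StrictlyTotallyPositive (T u)) ∧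
      ∀ v : ((u : Fin k) × Fin (dpart u)) → ℂ, (∀ p, v p ≠ 0) →
        (∀ i : Fin d,
          ∏ u : Fin k,
            ((((-1 : ℝ) ^ (dpart u + 1) * T u (Fin.last (dpart u)) i : ℝ) : ℂ) +
              ∑ j : Fin (dpart u),
                (((-1 : ℝ) ^ ((j : ℕ) + 1) * T u (Fin.castSucc j) i : ℝ) : ℂ) * v ⟨u, j⟩)
            = 0) →
        ∀ p, 0 < (v p).re ∧ (v p).im = 0 := by
  classical
  set T : (u : Fin k) → Matrix (Fin (dpart u + 1)) (Fin d) ℝ :=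
    fun u => Matrix.of fun l i => (((l : ℕ) : ℝ) + ((i : ℕ) : ℝ) + 1)⁻¹ with hT
  have hstp : ∀ u, StrictlyTotallyPositive (T u) := fun u => cauchyMat_stp _ _
  refine ⟨T, hstp, ?_⟩
  intro v hv hvanish
  set F : Fin k → Fin d → ℂ := fun u i =>
    ((((-1 : ℝ) ^ (dpart u + 1) * T u (Fin.last (dpart u)) i : ℝ) : ℂ) +
      ∑ j : Fin (dpart u),
        (((-1 : ℝ) ^ ((j : ℕ) + 1) * T u (Fin.castSucc j) i : ℝ) : ℂ) * v ⟨u, j⟩) with hF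
  have hvan : ∀ i, ∏ u, F u i = 0 := hvanish
  set S : Fin k → Finset (Fin d) := fun u => Finset.univ.filter (fun i => F u i = 0) with hS
  have hmem : ∀ u i, i ∈ S u ↔ F u i = 0 := fun u i => by simp [hS]
  -- Step A : card bound
  have hcard_le : ∀ u, (S u).card ≤ dpart u := by
    intro u
    by_contra hlt
    push_neg at hlt
    obtain ⟨t, hts, htc⟩ := Finset.exists_subset_card_eq (show dpart u + 1 ≤ (S u).card from hlt)
    set σ : Fin (dpart u + 1) → Fin d := fun s => ((t.orderIsoOfFin htc) s : Fin d) with hσ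
    have hσmono : StrictMono σ := fun a b hab => by
      simpa [hσ] using Subtype.coe_lt_coe.2 ((t.orderIsoOfFin htc).strictMono hab)
    have hσS : ∀ s, F u (σ s) = 0 := fun s => (hmem u _).1 (hts ((t.orderIsoOfFin htc) s).2)
    set Q : Matrix (Fin (dpart u + 1)) (Fin (dpart u + 1)) ℂ :=
      Matrix.of (fun s l => (((-1 : ℝ) ^ ((l : ℕ) + 1) * T u l (σ s) : ℝ) : ℂ)) with hQ
    set w : Fin (dpart u + 1) → ℂ :=
      fun l => Fin.lastCases 1 (fun j => v ⟨u, j⟩) l with hw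
    have hwlast : w (Fin.last _) = 1 := by simp [hw]
    have hwcast : ∀ j, w (Fin.castSucc j) = v ⟨u, j⟩ := fun j => by simp [hw]
    have hQw : Q.mulVec w = 0 := by
      funext s
      have key : Q.mulVec w s = F u (σ s) := by
        simp only [Matrix.mulVec, dotProduct]
        rw [Fin.sum_univ_castSucc, add_comm, hF]
        congr 1
        · simp only [hQ, Matrix.of_apply, hwlast, mul_one, Fin.val_last]
        · exact Finset.sum_congr rfl fun j _ => by
            simp only [hQ, Matrix.of_apply, hwcast, Fin.coe_castSucc]
      rw [Pi.zero_apply, key, hσS]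
    have hdet : Q.det ≠ 0 := by
      set M : Matrix (Fin (dpart u + 1)) (Fin (dpart u + 1)) ℂ :=
        ((T u).submatrix id σ).transpose.map Complex.ofRealHom with hM
      have hQfact : Q = Matrix.of (fun (s l : Fin (dpart u + 1)) => ((-1 : ℂ)) ^ ((l : ℕ) + 1) * M s l) := by
        ext s l
        simp only [hQ, hM, Matrix.of_apply, Matrix.map_apply, Matrix.transpose_apply,
          Matrix.submatrix_apply, id, Complex.ofRealHom_eq_coe]
        push_cast; ring
      rw [hQfact, Matrix.det_mul_row, hM, ← RingHom.mapMatrix_apply, ← RingHom.map_det,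
        Matrix.det_transpose]
      have hMpos : 0 < ((T u).submatrix id σ).det :=
        hstp u (dpart u + 1) id σ (Nat.le_add_left 1 (dpart u)) strictMono_id hσmono
      apply mul_ne_zero
      · exact Finset.prod_ne_zero_iff.2 fun l _ => pow_ne_zero _ (by norm_num)
      · simpa [Complex.ofRealHom_eq_coe, Complex.ofReal_ne_zero] using hMpos.ne'
    have hw0 := Matrix.eq_zero_of_mulVec_eq_zero hdet hQw
    have hcontra := congrFun hw0 (Fin.last _)
    rw [hwlast] at hcontra
    exact one_ne_zero hcontra
  -- Step B : covering and counting
  have hcover : ∀ i : Fin d, ∃ u, i ∈ S u := by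
    intro i
    obtain ⟨u, _, hu⟩ := Finset.prod_eq_zero_iff.mp (hvan i)
    exact ⟨u, (hmem u i).2 hu⟩
  have hsum_ge : d ≤ ∑ u, (S u).card := by
    calc d = (Finset.univ : Finset (Fin d)).card := by simp
      _ ≤ (Finset.univ.biUnion S).card := Finset.card_le_card (fun i _ =>
          Finset.mem_biUnion.mpr ⟨(hcover i).choose, Finset.mem_univ _, (hcover i).choose_spec⟩)
      _ ≤ ∑ u, (S u).card := Finset.card_biUnion_le
  have hsum_eq : ∑ u, (S u).card = ∑ u, dpart u :=
    le_antisymm (Finset.sum_le_sum fun u _ => hcard_le u) (hd ▸ hsum_ge)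
  have hcard : ∀ u, (S u).card = dpart u := fun u =>
    (Finset.sum_eq_sum_iff_of_le (fun u _ => hcard_le u)).1 hsum_eq u (Finset.mem_univ u)
  -- Step C
  rintro ⟨u, j0⟩
  set σ : Fin (dpart u) → Fin d := fun s => (((S u).orderIsoOfFin (hcard u)) s : Fin d) with hσ
  have hσmono : StrictMono σ := fun a b hab => by
    simpa [hσ] using Subtype.coe_lt_coe.2 (((S u).orderIsoOfFin (hcard u)).strictMono hab)
  have hσS : ∀ s, F u (σ s) = 0 := fun s =>
    (hmem u _).1 (((S u).orderIsoOfFin (hcard u)) s).2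
  set D : Fin (dpart u + 1) → ℝ := fun l => ((T u).submatrix l.succAbove σ).det with hD
  have hDpos : ∀ l, 0 < D l := fun l =>
    hstp u (dpart u) l.succAbove σ (hpos u) (Fin.strictMono_succAbove l) hσmono
  have hlap : ∀ s : Fin (dpart u),
      ∑ l : Fin (dpart u + 1), (-1 : ℝ) ^ ((l : ℕ) + 1) * T u l (σ s) * D l = 0 := by
    intro s
    set N : Matrix (Fin (dpart u + 1)) (Fin (dpart u + 1)) ℝ :=
      Matrix.of (fun (r : Fin (dpart u + 1)) (l : Fin (dpart u + 1)) => T u l (σ (Fin.snoc (α := fun _ : Fin (dpart u + 1) => Fin (dpart u)) (fun r' => r') s r))) with hN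
    have hrow : N (Fin.castSucc s) = N (Fin.last _) := by
      funext l; simp [hN, Fin.snoc_castSucc, Fin.snoc_last]
    have hdet0 : N.det = 0 := Matrix.det_zero_of_row_eq (Fin.castSucc_lt_last s).ne hrow
    rw [Matrix.det_succ_row N (Fin.last _)] at hdet0
    have hterm : ∀ l : Fin (dpart u + 1),
        (-1 : ℝ) ^ (((Fin.last (dpart u)) : ℕ) + (l : ℕ)) * N (Fin.last _) l *
          ((N.submatrix (Fin.last _).succAbove l.succAbove).det)
        = (-1 : ℝ) ^ (dpart u + ((l : ℕ))) * T u l (σ s) * D l := by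
      intro l
      have hNlast : N (Fin.last _) l = T u l (σ s) := by
        simp [hN, Fin.snoc_last]
      have e : N.submatrix (Fin.last _).succAbove l.succAbove
          = ((T u).submatrix l.succAbove σ).transpose := by
        ext r c
        simp [hN, Fin.succAbove_last, Fin.snoc_castSucc]
      rw [hNlast, e, Matrix.det_transpose, Fin.val_last, hD]
    rw [Finset.sum_congr rfl (fun l _ => hterm l)] at hdet0
    have hmul := congrArg (fun z => (-1 : ℝ) ^ (dpart u + 1) * z) hdet0
    simp only [Finset.mul_sum, mul_zero] at hmul
    refine Eq.trans (Finset.sum_congr rfl fun l _ => ?_) hmul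
    rw [← mul_assoc, ← mul_assoc, ← pow_add]
    have hexp : (-1 : ℝ) ^ (dpart u + 1 + (dpart u + (l : ℕ))) = (-1 : ℝ) ^ ((l : ℕ) + 1) := by
      rw [show dpart u + 1 + (dpart u + (l : ℕ)) = 2 * dpart u + ((l : ℕ) + 1) from by ring,
        pow_add, pow_mul, neg_one_sq, one_pow, one_mul]
    rw [hexp]
  set A : Matrix (Fin (dpart u)) (Fin (dpart u)) ℂ :=
    Matrix.of (fun s j => (((-1 : ℝ) ^ ((j : ℕ) + 1) * T u (Fin.castSucc j) (σ s) : ℝ) : ℂ)) with hA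
  set g : Fin (dpart u) → ℂ :=
    fun j => (D (Fin.last _) : ℂ) * v ⟨u, j⟩ - (D (Fin.castSucc j) : ℂ) with hg
  have hAg : A.mulVec g = 0 := by
    funext s
    have hF0 : F u (σ s) = 0 := hσS s
    rw [hF] at hF0
    have hsum1 : ∑ j : Fin (dpart u),
          (((-1 : ℝ) ^ ((j : ℕ) + 1) * T u (Fin.castSucc j) (σ s) : ℝ) : ℂ) * v ⟨u, j⟩
        = -(((-1 : ℝ) ^ (dpart u + 1) * T u (Fin.last (dpart u)) (σ s) : ℝ) : ℂ) := by
      linear_combination hF0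
    have hsum2 : ∑ j : Fin (dpart u),
          (-1 : ℝ) ^ ((j : ℕ) + 1) * T u (Fin.castSucc j) (σ s) * D (Fin.castSucc j)
        = -((-1 : ℝ) ^ (dpart u + 1) * T u (Fin.last (dpart u)) (σ s) * D (Fin.last _)) := by
      have h := hlap s
      rw [Fin.sum_univ_castSucc] at h
      simp only [Fin.coe_castSucc, Fin.val_last] at h
      linarith
    simp only [Matrix.mulVec, dotProduct, Pi.zero_apply]
    calc ∑ j : Fin (dpart u), A s j * g j
        = (D (Fin.last _) : ℂ) *
            (∑ j : Fin (dpart u),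
              (((-1 : ℝ) ^ ((j : ℕ) + 1) * T u (Fin.castSucc j) (σ s) : ℝ) : ℂ) * v ⟨u, j⟩)
          - ((∑ j : Fin (dpart u),
              (-1 : ℝ) ^ ((j : ℕ) + 1) * T u (Fin.castSucc j) (σ s) * D (Fin.castSucc j)
              : ℝ) : ℂ) := by
          rw [Finset.mul_sum]
          push_cast
          rw [← Finset.sum_sub_distrib]
          refine Finset.sum_congr rfl fun j _ => ?_
          simp only [hA, hg, Matrix.of_apply]
          push_cast
          ring
      _ = 0 := by rw [hsum1, hsum2]; push_cast; ring
  have hdetA : A.det ≠ 0 := by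
    set M : Matrix (Fin (dpart u)) (Fin (dpart u)) ℂ :=
      ((T u).submatrix Fin.castSucc σ).transpose.map Complex.ofRealHom with hM
    have hAfact : A = Matrix.of (fun (s j : Fin (dpart u)) => ((-1 : ℂ)) ^ ((j : ℕ) + 1) * M s j) := by
      ext s j
      simp only [hA, hM, Matrix.of_apply, Matrix.map_apply, Matrix.transpose_apply,
        Matrix.submatrix_apply, Complex.ofRealHom_eq_coe]
      push_cast; ring
    rw [hAfact, Matrix.det_mul_row, hM, ← RingHom.mapMatrix_apply, ← RingHom.map_det,
      Matrix.det_transpose]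
    have hMpos : 0 < ((T u).submatrix Fin.castSucc σ).det :=
      hstp u (dpart u) Fin.castSucc σ (hpos u) Fin.strictMono_castSucc hσmono
    apply mul_ne_zero
    · exact Finset.prod_ne_zero_iff.2 fun l _ => pow_ne_zero _ (by norm_num)
    · simpa [Complex.ofRealHom_eq_coe, Complex.ofReal_ne_zero] using hMpos.ne'
  have hg0 := Matrix.eq_zero_of_mulVec_eq_zero hdetA hAg
  have hgj := congrFun hg0 j0
  rw [hg, Pi.zero_apply, sub_eq_zero] at hgj
  have hDl : (D (Fin.last (dpart u)) : ℂ) ≠ 0 := by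
    exact_mod_cast (hDpos (Fin.last (dpart u))).ne'
  have hval : v ⟨u, j0⟩ = ((D (Fin.castSucc j0) / D (Fin.last _) : ℝ) : ℂ) := by
    push_cast
    field_simp
    linear_combination hgj
  rw [hval]
  constructor
  · rw [Complex.ofReal_re]
    exact div_pos (hDpos _) (hDpos _)
  · rw [Complex.ofReal_im]
end
end
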